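/- arXiv:1604.00526 — 10 statements merged into one kernel-verified Lean document; each statement's English description precedes it below -/
import Mathlib

section
/- For every k ∈ ℕ, the Lyapunov values satisfy Φ_{k+1} ≤ Φ_k − (1/2)(1/γ_k − L_{j_k}(x^k_{−j_k}) − 2M√(ρ_τ τ))‖x^{k+1}_{j_k} − x^k_{j_k}‖²; in particular, since γ_k ≤ c(L + 2M√(ρ_τ τ))^{−1} with c ∈ (0,1), one has Φ_{k+1} ≤ Φ_k − C‖x^{k+1} − x^k‖² for all k ∈ ℕ, where C := (1/2)(1/c − 1)(L + 2M√(ρ_τ τ)) > 0. -/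
open Finset Filter RealInnerProductSpace

/-- squared ℓ²-norm on the product `H = H₁ × ⋯ × H_m`: `‖x‖² = Σ_j ‖x_j‖²`. -/
noncomputable def sqNorm {m : ℕ} {H : Fin m → Type*} [∀ j, NormedAddCommGroup (H j)]
    (x : ∀ j, H j) : ℝ := ∑ j, ‖x j‖ ^ 2

/-- the partial gradient map: `y ↦ ∇_j f(x_1, …, x_{j-1}, y, x_{j+1}, …, x_m)`. -/
noncomputable def pgrad {m : ℕ} {H : Fin m → Type*} [∀ j, NormedAddCommGroup (H j)]
    [∀ j, InnerProductSpace ℝ (H j)] [∀ j, FiniteDimensional ℝ (H j)]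
    (f : (∀ j, H j) → ℝ) (x : ∀ j, H j) (j : Fin m) (y : H j) : H j :=
  gradient (fun z => f (Function.update x j z)) y

lemma descent_aux {E : Type*} [NormedAddCommGroup E] [InnerProductSpace ℝ E] [CompleteSpace E]
    (φ : E → ℝ) (G : E → E) (hG : ∀ y, HasGradientAt φ (G y) y)
    (K : ℝ) (hK : ∀ y y', ‖G y - G y'‖ ≤ K * ‖y - y'‖) (u v : E) :
    φ v ≤ φ u + ⟪G u, v - u⟫ + K / 2 * ‖v - u‖ ^ 2 := by
  set Δ := v - u with hΔ
  have hK' : ∀ y y', ‖G y - G y'‖ ≤ max K 0 * ‖y - y'‖ := fun y y' =>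
    (hK y y').trans (mul_le_mul_of_nonneg_right (le_max_left _ _) (norm_nonneg _))
  have hGc : Continuous G := by
    refine (LipschitzWith.of_dist_le_mul (K := ⟨max K 0, le_max_right _ _⟩) ?_).continuous
    intro y y'
    rw [dist_eq_norm, dist_eq_norm]
    exact hK' y y'
  set ψ : ℝ → ℝ := fun t => φ (u + t • Δ) with hψ
  set ψ' : ℝ → ℝ := fun t => ⟪G (u + t • Δ), Δ⟫ with hψ'
  have hline : ∀ t : ℝ, HasDerivAt (fun s : ℝ => u + s • Δ) Δ t := by
    intro t
    simpa using ((hasDerivAt_id t).smul_const Δ).const_add u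
  have hderiv : ∀ t : ℝ, HasDerivAt ψ (ψ' t) t := by
    intro t
    have h1 := (hG (u + t • Δ)).hasFDerivAt
    have h2 := h1.comp_hasDerivAt t (hline t)
    rw [InnerProductSpace.toDual_apply_apply] at h2
    exact h2
  have hcont : Continuous ψ' := by
    exact (hGc.comp (by continuity)).inner continuous_const
  have hFTC : ∫ t in (0:ℝ)..1, ψ' t = ψ 1 - ψ 0 :=
    intervalIntegral.integral_eq_sub_of_hasDerivAt (fun t _ => hderiv t)
      (hcont.intervalIntegrable 0 1)
  have hptwise : ∀ t ∈ Set.Icc (0:ℝ) 1, ψ' t ≤ ψ' 0 + (K * ‖Δ‖ ^ 2) * t := by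
    intro t ht
    have h1 : ψ' t - ψ' 0 = ⟪G (u + t • Δ) - G (u + (0:ℝ) • Δ), Δ⟫ := by
      simp [ψ', inner_sub_left]
    have h2 : ⟪G (u + t • Δ) - G (u + (0:ℝ) • Δ), Δ⟫ ≤ ‖G (u + t • Δ) - G (u + (0:ℝ) • Δ)‖ * ‖Δ‖ :=
      real_inner_le_norm _ _
    have h3 : ‖G (u + t • Δ) - G (u + (0:ℝ) • Δ)‖ ≤ K * (t * ‖Δ‖) := by
      have := hK (u + t • Δ) (u + (0:ℝ) • Δ)
      have he : u + t • Δ - (u + (0:ℝ) • Δ) = t • Δ := by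
        simp
      rw [he, norm_smul] at this
      simpa [abs_of_nonneg ht.1] using this
    nlinarith [norm_nonneg Δ, ht.1, mul_le_mul_of_nonneg_right h3 (norm_nonneg Δ)]
  have hint : ∫ t in (0:ℝ)..1, ψ' t ≤ ∫ t in (0:ℝ)..1, (ψ' 0 + (K * ‖Δ‖ ^ 2) * t) := by
    apply intervalIntegral.integral_mono_on zero_le_one (hcont.intervalIntegrable 0 1)
      ((continuous_const.add (continuous_const.mul continuous_id)).intervalIntegrable 0 1)
      hptwise
  have hval : ∫ t in (0:ℝ)..1, (ψ' 0 + (K * ‖Δ‖ ^ 2) * t) = ψ' 0 + (K * ‖Δ‖ ^ 2) / 2 := by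
    rw [intervalIntegral.integral_add (f := fun _ => ψ' 0) (g := fun t => K * ‖Δ‖ ^ 2 * t) (intervalIntegrable_const)
      ((continuous_const.mul continuous_id').intervalIntegrable 0 1),
      intervalIntegral.integral_const_mul, integral_id]
    norm_num
    ring
  have hψ1 : ψ 1 = φ v := by simp [ψ, hΔ]
  have hψ0 : ψ 0 = φ u := by simp [ψ]
  have hψ'0 : ψ' 0 = ⟪G u, Δ⟫ := by simp [ψ']
  rw [hFTC, hψ1, hψ0] at hint
  rw [hval, hψ'0] at hint
  nlinarith [hint]

lemma ereal_coe_sum {α : Type*} (s : Finset α) (f : α → ℝ) :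
    ((∑ i ∈ s, f i : ℝ) : EReal) = ∑ i ∈ s, (f i : EReal) := by
  induction s using Finset.cons_induction with
  | empty => simp
  | cons a s ha ih => rw [Finset.sum_cons, Finset.sum_cons, EReal.coe_add, ih]

lemma ereal_sum_ne_bot {α : Type*} (s : Finset α) (f : α → EReal) (h : ∀ i ∈ s, f i ≠ ⊥) :
    ∑ i ∈ s, f i ≠ ⊥ := by
  induction s using Finset.cons_induction with
  | empty => simp
  | cons a s ha ih =>
    rw [Finset.sum_cons]
    simp only [ne_eq, EReal.add_eq_bot_iff, not_or]
    exact ⟨h a (Finset.mem_cons_self a s), ih fun i hi => h i (Finset.mem_cons_of_mem hi)⟩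

lemma ereal_sum_ne_top {α : Type*} (s : Finset α) (f : α → EReal)
    (hb : ∀ i ∈ s, f i ≠ ⊥) (ht : ∑ i ∈ s, f i ≠ ⊤) : ∀ i ∈ s, f i ≠ ⊤ := by
  classical
  intro i hi hcon
  apply ht
  rw [← Finset.add_sum_erase s f hi, hcon]
  exact EReal.top_add_of_ne_bot (ereal_sum_ne_bot _ _ fun j hj => hb j (Finset.mem_of_mem_erase hj))

lemma sqrt_alg1 (M sρ sτ τR E : ℝ) (hsτ : 0 < sτ) (h2 : sτ^2 = τR)
    (hE : E = sρ * sτ) : (M * sρ / (2 * sτ)) * τR = M * E / 2 := by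
  rw [hE]
  field_simp
  rw [← h2]

lemma sqrt_alg2 (M sρ sτ ρτR E : ℝ) (hsτ : 0 < sτ) (h3 : sρ^2 = ρτR)
    (hE : E = sρ * sτ) : 2 * E * (M * sρ / (2 * sτ)) = M * ρτR := by
  rw [hE]
  field_simp
  rw [← h3]; ring

lemma cross_aux (P Dn w s Sk ρ E coef M nd : ℝ) (hM : 0 < M) (hE : 0 < E)
    (h1 : P ≤ Dn * nd) (h2 : Dn ≤ M * w) (hnd : 0 ≤ nd) (hw : 0 ≤ w)
    (hw2 : w ^ 2 = s) (hdel : s ≤ ρ * Sk) (hid : 2 * E * coef = M * ρ) :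
    P ≤ coef * Sk + M * E / 2 * nd ^ 2 := by
  have hstep1 : P ≤ M * (w * nd) := by nlinarith [mul_le_mul_of_nonneg_right h2 hnd]
  have step2 : 2 * E * (w * nd) ≤ w ^ 2 + E ^ 2 * nd ^ 2 := by nlinarith [sq_nonneg (w - E * nd)]
  have p1 : 2 * E * P ≤ 2 * E * (M * (w * nd)) := mul_le_mul_of_nonneg_left hstep1 (by positivity)
  have p2 : M * (2 * E * (w * nd)) ≤ M * (w ^ 2 + E ^ 2 * nd ^ 2) :=
    mul_le_mul_of_nonneg_left step2 hM.le
  have hw2' : M * w ^ 2 = M * s := by rw [hw2]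
  have hdel' : M * s ≤ M * (ρ * Sk) := mul_le_mul_of_nonneg_left hdel hM.le
  have hq : M * (ρ * Sk) = 2 * E * (coef * Sk) := by linear_combination Sk * hid.symm
  have hchain : 2 * E * P ≤ 2 * E * (coef * Sk) + M * E ^ 2 * nd ^ 2 := by
    linarith only [p1, p2, hw2', hdel', hq]
  nlinarith [hchain, hE]

lemma kappa_step (τ : ℕ) (g : ℕ → ℝ) :
    ∑ i ∈ Finset.range τ, ((i:ℝ)+1) * g (i+1)
      = ∑ i ∈ Finset.range τ, ((i:ℝ)+1) * g i - ∑ i ∈ Finset.range τ, g i + τ * g τ := by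
  have h1 := Finset.sum_range_succ' (fun i => (i:ℝ) * g i) τ
  have h2 := Finset.sum_range_succ (fun i => (i:ℝ) * g i) τ
  have h3 : ∑ i ∈ Finset.range τ, (i:ℝ) * g i
      = ∑ i ∈ Finset.range τ, (((i:ℝ)+1) * g i - g i) :=
    Finset.sum_congr rfl fun i _ => by ring
  rw [Finset.sum_sub_distrib] at h3
  push_cast at h1
  linarith

set_option maxHeartbeats 3200000 in
theorem stmt_0 {m : ℕ} (hm : 1 ≤ m)
    (H : Fin m → Type*) [∀ j, NormedAddCommGroup (H j)]
    [∀ j, InnerProductSpace ℝ (H j)] [∀ j, FiniteDimensional ℝ (H j)]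
    -- f is C¹
    (f : (∀ j, H j) → ℝ) (hf : ContDiff ℝ 1 f)
    -- each r_j is proper and lower semicontinuous with values in (−∞, +∞]
    (r : ∀ j, H j → EReal)
    (hr_ne_top : ∀ j, ∃ y, r j y ≠ ⊤) (hr_ne_bot : ∀ j y, r j y ≠ ⊥)
    (hr_lsc : ∀ j, LowerSemicontinuous (r j))
    -- Ψ = f + Σ_j r_j, bounded below
    (Ψ : (∀ j, H j) → EReal) (hΨ : ∀ x, Ψ x = (f x : EReal) + ∑ j, r j (x j))
    (hΨbdd : ∃ B : ℝ, ∀ x, (B : EReal) ≤ Ψ x)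
    -- parameters
    (τ ρτ : ℕ) (hτ : 1 ≤ τ) (hρτ1 : 1 ≤ ρτ) (hρττ : ρτ ≤ τ)
    (c M L γmin : ℝ) (hc0 : 0 < c) (hc1 : c < 1) (hM : 0 < M) (hL : 0 < L)
    (hγmin : 0 < γmin)
    -- the iterates, extended by x^h = x^0 for h ≤ 0
    (x : ℤ → ∀ j, H j) (hx0 : ∀ h : ℤ, h ≤ 0 → x h = x 0)
    (hΨx0 : Ψ (x 0) < ⊤)
    -- active blocks and delays
    (jj : ℕ → Fin m) (d : ℕ → Fin m → ℕ) (hd : ∀ k j, d k j ≤ τ)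
    (hcount : ∀ (k : ℕ) (j : Fin m),
      Set.ncard {h : ℕ | k - τ ≤ h ∧ h ≤ k ∧ jj h = j} ≤ ρτ)
    -- the delayed iterate x^{k-d_k}
    (xd : ℕ → ∀ j, H j) (hxd : ∀ (k : ℕ) (j : Fin m), xd k j = x ((k : ℤ) - d k j) j)
    -- stepsizes
    (γ : ℕ → ℝ)
    (hγ : ∀ k, γmin ≤ γ k ∧ γ k ≤ c / (L + 2 * M * Real.sqrt ((ρτ : ℝ) * τ)))
    -- the update: only block j_k moves, and it moves to a minimizer of the prox-subproblem
    (hoff : ∀ (k : ℕ) (j : Fin m), j ≠ jj k → x ((k : ℤ) + 1) j = x k j)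
    (hprox : ∀ (k : ℕ) (y : H (jj k)),
      r (jj k) (x ((k : ℤ) + 1) (jj k)) +
        ((⟪pgrad f (xd k) (jj k) (xd k (jj k)), x ((k : ℤ) + 1) (jj k) - x k (jj k)⟫ +
            (1 / (2 * γ k)) * ‖x ((k : ℤ) + 1) (jj k) - x k (jj k)‖ ^ 2 : ℝ) : EReal) ≤
      r (jj k) y +
        ((⟪pgrad f (xd k) (jj k) (xd k (jj k)), y - x k (jj k)⟫ +
            (1 / (2 * γ k)) * ‖y - x k (jj k)‖ ^ 2 : ℝ) : EReal))
    -- (i) partial-gradient Lipschitz moduli, bounded by L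
    (Lip : ℕ → Fin m → ℝ)
    (hLip : ∀ (k : ℕ) (j : Fin m) (y y' : H j),
      ‖pgrad f (x k) j y - pgrad f (x k) j y'‖ ≤ Lip k j * ‖y - y'‖)
    (hLipL : ∀ k j, Lip k j ≤ L)
    -- (ii) delayed-gradient bound
    (hMd : ∀ k : ℕ,
      ‖pgrad f (x k) (jj k) (x k (jj k)) - pgrad f (xd k) (jj k) (xd k (jj k))‖ ≤
        M * Real.sqrt (sqNorm (x k - xd k)))
    -- κ_k, the Lyapunov value Φ_k, and the constant C
    (κ : ℕ → ℝ)
    (hκ : ∀ k : ℕ, κ k = (M * Real.sqrt ρτ / (2 * Real.sqrt τ)) *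
      ∑ i ∈ Finset.range τ,
        ((i : ℝ) + 1) * sqNorm (x ((k : ℤ) - τ + 1 + i) - x ((k : ℤ) - τ + i)))
    (Φ : ℕ → EReal) (hΦ : ∀ k : ℕ, Φ k = Ψ (x k) + (κ k : EReal))
    (C : ℝ) (hC : C = (1 / 2) * (1 / c - 1) * (L + 2 * M * Real.sqrt ((ρτ : ℝ) * τ))) :
    (∀ k : ℕ, Φ (k + 1) ≤ Φ k -
      (((1 / 2) * (1 / γ k - Lip k (jj k) - 2 * M * Real.sqrt ((ρτ : ℝ) * τ)) *
          ‖x ((k : ℤ) + 1) (jj k) - x k (jj k)‖ ^ 2 : ℝ) : EReal)) ∧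
    0 < C ∧
    ∀ k : ℕ, Φ (k + 1) ≤ Φ k - ((C * sqNorm (x ((k : ℤ) + 1) - x k) : ℝ) : EReal) := by
  classical
  set E : ℝ := Real.sqrt ((ρτ : ℝ) * τ) with hEdef
  have hτR : (0:ℝ) < τ := by exact_mod_cast hτ
  have hρR : (0:ℝ) < ρτ := by exact_mod_cast hρτ1
  have hsτ : (0:ℝ) < Real.sqrt τ := Real.sqrt_pos.2 hτR
  have hsρ : (0:ℝ) < Real.sqrt ρτ := Real.sqrt_pos.2 hρR
  have hEeq : E = Real.sqrt ρτ * Real.sqrt τ := Real.sqrt_mul hρR.le _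
  have hE : 0 < E := by rw [hEeq]; positivity
  have hsτ2 : Real.sqrt τ ^ 2 = (τ:ℝ) := Real.sq_sqrt hτR.le
  have hsρ2 : Real.sqrt ρτ ^ 2 = (ρτ:ℝ) := Real.sq_sqrt hρR.le
  have hLE : 0 < L + 2 * M * E := by positivity
  set coefκ : ℝ := M * Real.sqrt ρτ / (2 * Real.sqrt τ) with hcoefdef
  have hcoefκ : 0 ≤ coefκ := by positivity
  have hcτ : coefκ * (τ:ℝ) = M * E / 2 :=
    sqrt_alg1 M _ _ _ E hsτ hsτ2 hEeq
  have hcoefid : 2 * E * coefκ = M * (ρτ:ℝ) :=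
    sqrt_alg2 M _ _ _ E hsτ hsρ2 hEeq
  -- squared norm of single-block difference
  have hsqΔ : ∀ k : ℕ, sqNorm (x ((k:ℤ)+1) - x (k:ℤ)) =
      ‖x ((k:ℤ)+1) (jj k) - x (k:ℤ) (jj k)‖ ^ 2 := by
    intro k
    have h0 : sqNorm (x ((k:ℤ)+1) - x (k:ℤ)) = ∑ j', ‖x ((k:ℤ)+1) j' - x (k:ℤ) j'‖ ^ 2 := by
      simp only [sqNorm, Pi.sub_apply]
    rw [h0]
    refine Finset.sum_eq_single (jj k) (fun b _ hb => ?_) (fun h => absurd (Finset.mem_univ _) h)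
    rw [hoff k b hb, sub_self, norm_zero]
    norm_num
  -- main per-step inequality
  have main : ∀ k : ℕ, Φ (k + 1) ≤ Φ k -
      (((1 / 2) * (1 / γ k - Lip k (jj k) - 2 * M * E) *
          ‖x ((k : ℤ) + 1) (jj k) - x k (jj k)‖ ^ 2 : ℝ) : EReal) := by
    intro k
    by_cases hΨtop : Ψ (x (k:ℤ)) = ⊤
    · rw [hΦ k, hΨtop, EReal.top_add_of_ne_bot (EReal.coe_ne_bot _), EReal.top_sub_coe]
      exact le_top
    -- finiteness of the r-values at x^k
    have hsumne : ∑ j', r j' (x (k:ℤ) j') ≠ ⊤ := by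
      intro hcon
      apply hΨtop
      rw [hΨ (x (k:ℤ)), hcon, EReal.add_top_of_ne_bot (EReal.coe_ne_bot _)]
    have hune : ∀ j', r j' (x (k:ℤ) j') ≠ ⊤ := fun j' =>
      ereal_sum_ne_top _ _ (fun i _ => hr_ne_bot i _) hsumne j' (Finset.mem_univ j')
    set a : Fin m → ℝ := fun j' => (r j' (x (k:ℤ) j')).toReal with hadef
    have ha : ∀ j', r j' (x (k:ℤ) j') = ((a j' : ℝ) : EReal) := fun j' =>
      (EReal.coe_toReal (hune j') (hr_ne_bot j' _)).symm
    -- finiteness of r at the new point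
    obtain ⟨y₀, hy₀⟩ := hr_ne_top (jj k)
    have hvne : r (jj k) (x ((k:ℤ)+1) (jj k)) ≠ ⊤ := by
      intro hcon
      have h1 := hprox k y₀
      rw [hcon, EReal.top_add_of_ne_bot (EReal.coe_ne_bot _)] at h1
      exact (EReal.add_lt_top hy₀ (EReal.coe_ne_top _)).ne (top_le_iff.1 h1)
    set b : ℝ := (r (jj k) (x ((k:ℤ)+1) (jj k))).toReal with hbdef
    have hb : r (jj k) (x ((k:ℤ)+1) (jj k)) = ((b:ℝ) : EReal) :=
      (EReal.coe_toReal hvne (hr_ne_bot _ _)).symm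
    -- real prox inequality
    have hproxR : b + (⟪pgrad f (xd k) (jj k) (xd k (jj k)),
        x ((k:ℤ)+1) (jj k) - x (k:ℤ) (jj k)⟫ +
        1 / (2 * γ k) * ‖x ((k:ℤ)+1) (jj k) - x (k:ℤ) (jj k)‖ ^ 2) ≤ a (jj k) := by
      have h1 := hprox k (x (k:ℤ) (jj k))
      rw [hb, ha (jj k), ← EReal.coe_add, ← EReal.coe_add, EReal.coe_le_coe_iff] at h1
      simp only [sub_self, inner_zero_right, norm_zero, ne_eq, OfNat.ofNat_ne_zero,
        not_false_eq_true, zero_pow, mul_zero, add_zero, zero_add] at h1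
      exact h1
    -- descent inequality
    have hφdiff : Differentiable ℝ (fun z => f (Function.update (x (k:ℤ)) (jj k) z)) :=
      (hf.differentiable one_ne_zero).comp ((contDiff_update 1 (x (k:ℤ)) (jj k)).differentiable one_ne_zero)
    have hG : ∀ y, HasGradientAt (fun z => f (Function.update (x (k:ℤ)) (jj k) z))
        (pgrad f (x (k:ℤ)) (jj k) y) y := fun y => (hφdiff y).hasGradientAt
    have hdesc := descent_aux _ _ hG (Lip k (jj k)) (hLip k (jj k))
      (x (k:ℤ) (jj k)) (x ((k:ℤ)+1) (jj k))
    have hup1 : Function.update (x (k:ℤ)) (jj k) (x (k:ℤ) (jj k)) = x (k:ℤ) :=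
      Function.update_eq_self _ _
    have hup2 : Function.update (x (k:ℤ)) (jj k) (x ((k:ℤ)+1) (jj k)) = x ((k:ℤ)+1) := by
      funext j'
      by_cases h : j' = jj k
      · subst h; simp
      · rw [Function.update_of_ne h, hoff k j' h]
    simp only [hup1, hup2] at hdesc
    -- κ recursion
    set g : ℕ → ℝ := fun i => sqNorm (x ((k:ℤ) - τ + 1 + i) - x ((k:ℤ) - τ + i)) with hgdef
    set Sk : ℝ := ∑ i ∈ Finset.range τ, g i with hSkdef
    have hκ1 : κ k = coefκ * ∑ i ∈ Finset.range τ, ((i:ℝ)+1) * g i := hκ k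
    have hκ2 : κ (k+1) = coefκ * ∑ i ∈ Finset.range τ, ((i:ℝ)+1) * g (i+1) := by
      rw [hκ (k+1)]
      congr 1
      apply Finset.sum_congr rfl
      intro i _
      have e1 : ((k+1:ℕ):ℤ) - (τ:ℤ) + 1 + (i:ℤ) = (k:ℤ) - τ + 1 + ((i+1:ℕ):ℤ) := by
        push_cast; ring
      have e2 : ((k+1:ℕ):ℤ) - (τ:ℤ) + (i:ℤ) = (k:ℤ) - τ + ((i+1:ℕ):ℤ) := by
        push_cast; ring
      rw [e1, e2]
    have hgτ : g τ = sqNorm (x ((k:ℤ)+1) - x (k:ℤ)) := by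
      show sqNorm (x ((k:ℤ) - τ + 1 + (τ:ℕ)) - x ((k:ℤ) - τ + (τ:ℕ))) = _
      have e1 : (k:ℤ) - τ + 1 + (τ:ℕ) = (k:ℤ) + 1 := by push_cast; ring
      have e2 : (k:ℤ) - τ + (τ:ℕ) = (k:ℤ) := by push_cast; ring
      rw [e1, e2]
    have hκrec : κ (k+1) = κ k - coefκ * Sk
        + coefκ * (τ:ℝ) * ‖x ((k:ℤ)+1) (jj k) - x (k:ℤ) (jj k)‖ ^ 2 := by
      rw [hκ2, kappa_step τ g, hgτ, hsqΔ k, hκ1, hSkdef]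
      ring
    -- per-block bound on the delayed difference
    have hblock : ∀ j' : Fin m, ‖x (k:ℤ) j' - xd k j'‖ ^ 2 ≤ (ρτ:ℝ) *
        ∑ i ∈ Finset.range τ, ‖x ((k:ℤ) - τ + 1 + i) j' - x ((k:ℤ) - τ + i) j'‖ ^ 2 := by
      intro j'
      have hdjτ : d k j' ≤ τ := hd k j'
      set dj := d k j' with hdjdef
      set F : ℕ → H j' := fun i => x ((k:ℤ) - dj + i) j' with hFdef
      have htel : ∑ i ∈ Finset.range dj, (F (i+1) - F i) = F dj - F 0 :=
        Finset.sum_range_sub F dj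
      have hFd : F dj = x (k:ℤ) j' := by
        show x ((k:ℤ) - dj + (dj:ℕ)) j' = _
        have e : (k:ℤ) - dj + (dj:ℕ) = (k:ℤ) := by push_cast; ring
        rw [e]
      have hF0 : F 0 = xd k j' := by
        show x ((k:ℤ) - dj + (0:ℕ)) j' = _
        rw [hxd k j']
        have e : (k:ℤ) - dj + (0:ℕ) = (k:ℤ) - d k j' := by push_cast; ring
        rw [e]
      set T : Finset ℕ := (Finset.range dj).filter (fun i => F (i+1) - F i ≠ 0) with hTdef
      have hsum0 : ∑ i ∈ T, (F (i+1) - F i) = ∑ i ∈ Finset.range dj, (F (i+1) - F i) :=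
        Finset.sum_filter_ne_zero _
      have hmem : ∀ i ∈ T, 0 ≤ (k:ℤ) - dj + i ∧
          (k - τ ≤ ((k:ℤ) - dj + i).toNat ∧ ((k:ℤ) - dj + i).toNat ≤ k ∧
            jj (((k:ℤ) - dj + i).toNat) = j') := by
        intro i hiT
        rw [hTdef, Finset.mem_filter, Finset.mem_range] at hiT
        obtain ⟨hir, hine⟩ := hiT
        have hnonneg : 0 ≤ (k:ℤ) - dj + i := by
          by_contra hneg
          push_neg at hneg
          apply hine
          show x ((k:ℤ) - dj + ((i+1:ℕ):ℤ)) j' - x ((k:ℤ) - dj + (i:ℤ)) j' = 0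
          rw [hx0 ((k:ℤ) - dj + ((i+1:ℕ):ℤ)) (by push_cast; omega),
            hx0 ((k:ℤ) - dj + (i:ℤ)) (by omega), sub_self]
        refine ⟨hnonneg, ?_⟩
        set n : ℕ := ((k:ℤ) - dj + i).toNat with hndef
        have hn : (n:ℤ) = (k:ℤ) - dj + i := Int.toNat_of_nonneg hnonneg
        have hjn : jj n = j' := by
          by_contra hne
          apply hine
          have e1 : (k:ℤ) - dj + ((i+1:ℕ):ℤ) = (n:ℤ) + 1 := by push_cast; omega
          show x ((k:ℤ) - dj + ((i+1:ℕ):ℤ)) j' - x ((k:ℤ) - dj + (i:ℤ)) j' = 0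
          rw [e1, ← hn, hoff n j' (Ne.symm hne), sub_self]
        refine ⟨by omega, by omega, hjn⟩
      have hcard : (T.card : ℝ) ≤ (ρτ:ℝ) := by
        have hinj : Set.InjOn (fun i : ℕ => ((k:ℤ) - dj + i).toNat) (T : Set ℕ) := by
          intro i hi i' hi' he
          have h1 := (hmem i (Finset.mem_coe.1 hi)).1
          have h2 := (hmem i' (Finset.mem_coe.1 hi')).1
          have h3 : (((((k:ℤ) - dj + i).toNat):ℕ):ℤ) = ((((k:ℤ) - dj + i').toNat:ℕ):ℤ) := by
            exact_mod_cast congrArg (fun n : ℕ => (n:ℤ)) he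
          rw [Int.toNat_of_nonneg h1, Int.toNat_of_nonneg h2] at h3
          omega
        have hsubset : ((T.image (fun i : ℕ => ((k:ℤ) - dj + i).toNat)) : Set ℕ) ⊆
            {h : ℕ | k - τ ≤ h ∧ h ≤ k ∧ jj h = j'} := by
          intro n hn
          simp only [Finset.coe_image, Set.mem_image, Finset.mem_coe] at hn
          obtain ⟨i, hiT, rfl⟩ := hn
          exact (hmem i hiT).2
        have hfin : {h : ℕ | k - τ ≤ h ∧ h ≤ k ∧ jj h = j'}.Finite :=
          (Set.finite_Iic k).subset fun h hh => hh.2.1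
        have h4 := Set.ncard_le_ncard hsubset hfin
        rw [Set.ncard_coe_finset] at h4
        have h5 : T.card = (T.image (fun i : ℕ => ((k:ℤ) - dj + i).toNat)).card :=
          (Finset.card_image_of_injOn hinj).symm
        have h6 : T.card ≤ ρτ := by
          rw [h5]
          exact le_trans h4 (hcount k j')
        exact_mod_cast h6
      -- Cauchy–Schwarz
      have h0 : x (k:ℤ) j' - xd k j' = ∑ i ∈ T, (F (i+1) - F i) := by
        rw [hsum0, htel, hFd, hF0]
      have h1 : ‖∑ i ∈ T, (F (i+1) - F i)‖ ≤ ∑ i ∈ T, ‖F (i+1) - F i‖ := norm_sum_le _ _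
      have h2 : (∑ i ∈ T, ‖F (i+1) - F i‖) ^ 2 ≤
          (T.card : ℝ) * ∑ i ∈ T, ‖F (i+1) - F i‖ ^ 2 := sq_sum_le_card_mul_sum_sq
      have h3 : ∑ i ∈ T, ‖F (i+1) - F i‖ ^ 2 ≤ ∑ i ∈ Finset.range dj, ‖F (i+1) - F i‖ ^ 2 :=
        Finset.sum_le_sum_of_subset_of_nonneg (Finset.filter_subset _ _)
          (fun i _ _ => sq_nonneg _)
      have h4 : ‖x (k:ℤ) j' - xd k j'‖ ^ 2 ≤ (∑ i ∈ T, ‖F (i+1) - F i‖) ^ 2 := by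
        rw [h0]
        exact pow_le_pow_left₀ (norm_nonneg _) h1 2
      have hsumnn : (0:ℝ) ≤ ∑ i ∈ Finset.range dj, ‖F (i+1) - F i‖ ^ 2 :=
        Finset.sum_nonneg fun i _ => sq_nonneg _
      have hreidx : ∑ i ∈ Finset.range dj, ‖F (i+1) - F i‖ ^ 2 ≤
          ∑ i ∈ Finset.range τ, ‖x ((k:ℤ) - τ + 1 + i) j' - x ((k:ℤ) - τ + i) j'‖ ^ 2 := by
        have hI : ∑ i ∈ Finset.range dj, ‖F (i+1) - F i‖ ^ 2 =
            ∑ i ∈ Finset.Ico (τ - dj) τ,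
              ‖x ((k:ℤ) - τ + 1 + i) j' - x ((k:ℤ) - τ + i) j'‖ ^ 2 := by
          rw [Finset.sum_Ico_eq_sum_range]
          have hee : τ - (τ - dj) = dj := by omega
          rw [hee]
          apply Finset.sum_congr rfl
          intro i hi
          show ‖x ((k:ℤ) - dj + ((i+1:ℕ):ℤ)) j' - x ((k:ℤ) - dj + (i:ℤ)) j'‖ ^ 2 = _
          have e1 : (k:ℤ) - τ + 1 + ((τ - dj + i : ℕ):ℤ) = (k:ℤ) - dj + ((i+1:ℕ):ℤ) := by
            omega
          have e2 : (k:ℤ) - τ + ((τ - dj + i : ℕ):ℤ) = (k:ℤ) - dj + (i:ℤ) := by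
            omega
          rw [e1, e2]
        rw [hI]
        apply Finset.sum_le_sum_of_subset_of_nonneg
        · intro i hi
          rw [Finset.mem_Ico] at hi
          exact Finset.mem_range.2 hi.2
        · intro i _ _
          exact sq_nonneg _
      have h5 : (T.card : ℝ) * ∑ i ∈ T, ‖F (i+1) - F i‖ ^ 2 ≤
          (ρτ:ℝ) * ∑ i ∈ Finset.range dj, ‖F (i+1) - F i‖ ^ 2 := by
        apply mul_le_mul hcard h3 (Finset.sum_nonneg fun i _ => sq_nonneg _) hρR.le
      have h6 := mul_le_mul_of_nonneg_left hreidx hρR.le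
      linarith only [h4, h2, h5, h6]
    -- global delayed bound
    have hSknn : 0 ≤ Sk := by
      rw [hSkdef]
      exact Finset.sum_nonneg fun i _ => Finset.sum_nonneg fun j' _ => sq_nonneg _
    have hdel : sqNorm (x (k:ℤ) - xd k) ≤ (ρτ:ℝ) * Sk := by
      have h1 : sqNorm (x (k:ℤ) - xd k) = ∑ j', ‖x (k:ℤ) j' - xd k j'‖ ^ 2 := by
        simp only [sqNorm, Pi.sub_apply]
      have h2 : Sk = ∑ j' : Fin m, ∑ i ∈ Finset.range τ,
          ‖x ((k:ℤ) - τ + 1 + i) j' - x ((k:ℤ) - τ + i) j'‖ ^ 2 := by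
        rw [hSkdef, Finset.sum_comm]
        apply Finset.sum_congr rfl
        intro i _
        rw [hgdef]
        simp only [sqNorm, Pi.sub_apply]
      rw [h1, h2, Finset.mul_sum]
      exact Finset.sum_le_sum fun j' _ => hblock j'
    -- the cross term
    have hs0 : 0 ≤ sqNorm (x (k:ℤ) - xd k) :=
      Finset.sum_nonneg fun j' _ => sq_nonneg _
    have hw2 : Real.sqrt (sqNorm (x (k:ℤ) - xd k)) ^ 2 = sqNorm (x (k:ℤ) - xd k) :=
      Real.sq_sqrt hs0
    have hcross : ⟪pgrad f (x (k:ℤ)) (jj k) (x (k:ℤ) (jj k))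
          - pgrad f (xd k) (jj k) (xd k (jj k)),
          x ((k:ℤ)+1) (jj k) - x (k:ℤ) (jj k)⟫ ≤
        coefκ * Sk + M * E / 2 * ‖x ((k:ℤ)+1) (jj k) - x (k:ℤ) (jj k)‖ ^ 2 :=
      cross_aux _ _ _ _ _ _ _ _ _ _ hM hE (real_inner_le_norm _ _) (hMd k)
        (norm_nonneg _) (Real.sqrt_nonneg _) (Real.sq_sqrt hs0) hdel hcoefid
    -- assemble: express Ψ values as reals
    have hΨu : Ψ (x (k:ℤ)) = ((f (x (k:ℤ)) + ∑ j', a j' : ℝ) : EReal) := by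
      rw [hΨ, EReal.coe_add, ereal_coe_sum]
      congr 1
      exact Finset.sum_congr rfl fun j' _ => ha j'
    have hΨv : Ψ (x ((k:ℤ)+1)) =
        ((f (x ((k:ℤ)+1)) + ∑ j', (if j' = jj k then b else a j') : ℝ) : EReal) := by
      rw [hΨ, EReal.coe_add, ereal_coe_sum]
      congr 1
      apply Finset.sum_congr rfl
      intro j' _
      by_cases h : j' = jj k
      · subst h
        rw [if_pos rfl]
        exact hb
      · rw [if_neg h, hoff k j' h]
        exact ha j'
    have hBsum : ∑ j', (if j' = jj k then b else a j') = (∑ j', a j') - a (jj k) + b := by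
      have h1 := (Finset.add_sum_erase Finset.univ
        (fun j' => if j' = jj k then b else a j') (Finset.mem_univ (jj k))).symm
      have h2 := (Finset.add_sum_erase Finset.univ a (Finset.mem_univ (jj k))).symm
      have h3 : ∑ j' ∈ Finset.univ.erase (jj k), (if j' = jj k then b else a j') =
          ∑ j' ∈ Finset.univ.erase (jj k), a j' :=
        Finset.sum_congr rfl fun j' hj' => if_neg (Finset.ne_of_mem_erase hj')
      rw [if_pos rfl] at h1
      linarith only [h1, h2, h3]
    -- convert the goal to a real inequality
    have hcast : ((k+1:ℕ):ℤ) = (k:ℤ)+1 := by push_cast; ring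
    rw [hΦ (k+1), hΦ k, hcast, hΨv, hΨu, hκrec, ← EReal.coe_add, ← EReal.coe_add,
      ← EReal.coe_sub, EReal.coe_le_coe_iff]
    rw [hBsum]
    have hsubin : ⟪pgrad f (x (k:ℤ)) (jj k) (x (k:ℤ) (jj k))
          - pgrad f (xd k) (jj k) (xd k (jj k)),
          x ((k:ℤ)+1) (jj k) - x (k:ℤ) (jj k)⟫ =
        ⟪pgrad f (x (k:ℤ)) (jj k) (x (k:ℤ) (jj k)),
          x ((k:ℤ)+1) (jj k) - x (k:ℤ) (jj k)⟫ -
        ⟪pgrad f (xd k) (jj k) (xd k (jj k)),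
          x ((k:ℤ)+1) (jj k) - x (k:ℤ) (jj k)⟫ := inner_sub_left _ _ _
    rw [hsubin] at hcross
    have hcτ2 : coefκ * (τ:ℝ) * ‖x ((k:ℤ)+1) (jj k) - x (k:ℤ) (jj k)‖ ^ 2 =
        M * E / 2 * ‖x ((k:ℤ)+1) (jj k) - x (k:ℤ) (jj k)‖ ^ 2 := by
      rw [hcτ]
    have hγeq2 : 1 / (2 * γ k) * ‖x ((k:ℤ)+1) (jj k) - x (k:ℤ) (jj k)‖ ^ 2 =
        (1/2) * (1 / γ k) * ‖x ((k:ℤ)+1) (jj k) - x (k:ℤ) (jj k)‖ ^ 2 := by ring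
    linarith only [hdesc, hproxR, hcross, hcτ2, hγeq2]
  refine ⟨main, ?_, ?_⟩
  · rw [hC]
    have h1 : 1 < 1 / c := by
      rw [lt_div_iff₀ hc0]
      linarith
    have h2 : 0 < 1 / c - 1 := by linarith
    positivity
  · intro k
    refine le_trans (main k) (EReal.sub_le_sub le_rfl (EReal.coe_le_coe_iff.2 ?_))
    rw [hsqΔ k]
    have hγk : 0 < γ k := lt_of_lt_of_le hγmin (hγ k).1
    have h1 : (L + 2 * M * E) * γ k ≤ c := by
      have h0 := (hγ k).2
      rw [le_div_iff₀ hLE] at h0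
      linarith only [h0]
    have h2 : (L + 2 * M * E) / c ≤ 1 / γ k := by
      rw [div_le_div_iff₀ hc0 hγk]
      linarith only [h1]
    have h3 := hLipL k (jj k)
    have h2' : L * (1/c) + 2*M*E*(1/c) ≤ 1 / γ k := by
      have he : (L + 2*M*E)/c = L * (1/c) + 2*M*E*(1/c) := by ring
      linarith only [h2, he]
    have hCle : C ≤ (1/2) * (1 / γ k - Lip k (jj k) - 2 * M * E) := by
      rw [hC]
      nlinarith [h2', h3]
    exact mul_le_mul_of_nonneg_right hCle (sq_nonneg _)
end

section
/- The squared increments are summable, Σ_{k=0}^∞ ‖x^{k+1} − x^k‖² < ∞ (so in particular ‖x^{k+1} − x^k‖ → 0), the Lyapunov values Φ_k converge to a finite limit, and the objective values Ψ(x^k) converge to the same limit. -/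
open Finset Filter RealInnerProductSpace

section Aux

lemma my_descent {E : Type*} [NormedAddCommGroup E] [InnerProductSpace ℝ E]
    [CompleteSpace E] (g : E → ℝ) (hg : Differentiable ℝ g) (K : ℝ)
    (hlip : ∀ z z', ‖gradient g z - gradient g z'‖ ≤ K * ‖z - z'‖)
    (y v : E) : g (y + v) ≤ g y + ⟪gradient g y, v⟫ + K / 2 * ‖v‖ ^ 2 := by
  set c1 : ℝ := ⟪gradient g y, v⟫ with hc1
  set c2 : ℝ := K / 2 * ‖v‖ ^ 2 with hc2
  set ψ : ℝ → ℝ := fun t => g (y + t • v) - t * c1 - t ^ 2 * c2 with hψdef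
  have hline : ∀ t : ℝ, HasDerivAt (fun s : ℝ => y + s • v) v t := by
    intro t
    simpa using ((hasDerivAt_id t).smul_const v).const_add y
  have hcomp : ∀ t : ℝ, HasDerivAt (fun s : ℝ => g (y + s • v))
      ⟪gradient g (y + t • v), v⟫ t := by
    intro t
    have h1 := (hg (y + t • v)).hasGradientAt.hasFDerivAt.comp_hasDerivAt t (hline t)
    simpa [InnerProductSpace.toDual_apply_apply, Function.comp_def] using h1
  have hψ : ∀ t : ℝ, HasDerivAt ψ
      (⟪gradient g (y + t • v), v⟫ - c1 - 2 * t * c2) t := by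
    intro t
    have h2 : HasDerivAt (fun t : ℝ => t * c1) c1 t := by
      simpa using (hasDerivAt_id t).mul_const c1
    have h3 : HasDerivAt (fun t : ℝ => t ^ 2 * c2) (2 * t * c2) t := by
      simpa [pow_one] using (hasDerivAt_pow 2 t).mul_const c2
    exact ((hcomp t).sub h2).sub h3
  have hmono : AntitoneOn ψ (Set.Icc 0 1) := by
    apply antitoneOn_of_deriv_nonpos (convex_Icc 0 1)
    · exact Continuous.continuousOn (by
        have : Differentiable ℝ ψ := fun t => (hψ t).differentiableAt
        exact this.continuous)
    · intro t _
      exact (hψ t).differentiableAt.differentiableWithinAt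
    · intro t ht
      rw [(hψ t).deriv]
      rw [interior_Icc] at ht
      have ht0 : 0 < t := ht.1
      have hib : ⟪gradient g (y + t • v), v⟫ - c1 ≤ K * t * ‖v‖ ^ 2 := by
        have := real_inner_le_norm (gradient g (y + t • v) - gradient g y) v
        have hl := hlip (y + t • v) y
        have hn : ‖y + t • v - y‖ = t * ‖v‖ := by
          simp [norm_smul, abs_of_pos ht0]
        rw [hn] at hl
        have h4 : ⟪gradient g (y + t • v) - gradient g y, v⟫ ≤ K * (t * ‖v‖) * ‖v‖ :=
          le_trans this (mul_le_mul_of_nonneg_right hl (norm_nonneg v))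
        rw [inner_sub_left] at h4
        rw [hc1]
        nlinarith [h4]
      rw [hc2] at *
      nlinarith [hib]
  have h01 : ψ 1 ≤ ψ 0 := hmono (by norm_num) (by norm_num) (by norm_num)
  have hψ0 : ψ 0 = g y := by simp [hψdef]
  have hψ1 : ψ 1 = g (y + v) - c1 - c2 := by simp [hψdef]
  rw [hψ0, hψ1] at h01
  linarith

lemma my_norm_sum_sq {ι E : Type*} [NormedAddCommGroup E] (s : Finset ι) (v : ι → E) :
    ‖∑ i ∈ s, v i‖ ^ 2 ≤ (s.card : ℝ) * ∑ i ∈ s, ‖v i‖ ^ 2 := by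
  calc ‖∑ i ∈ s, v i‖ ^ 2 ≤ (∑ i ∈ s, ‖v i‖) ^ 2 :=
        pow_le_pow_left₀ (norm_nonneg _) (norm_sum_le s v) 2
    _ ≤ (s.card : ℝ) * ∑ i ∈ s, ‖v i‖ ^ 2 := by
        exact sq_sum_le_card_mul_sum_sq (s := s) (f := fun i => ‖v i‖)

lemma my_ereal_sum_ne_bot {ι : Type*} (s : Finset ι) (f : ι → EReal)
    (h : ∀ i ∈ s, f i ≠ ⊥) : ∑ i ∈ s, f i ≠ ⊥ := by
  classical
  induction s using Finset.induction_on with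
  | empty => simp
  | @insert a t hx ih =>
    rw [Finset.sum_insert hx]
    rw [Ne, EReal.add_eq_bot_iff]
    push_neg
    exact ⟨h a (Finset.mem_insert_self a t),
      ih fun i hi => h i (Finset.mem_insert_of_mem hi)⟩

lemma my_ereal_ne_top_of_sum {ι : Type*} (s : Finset ι) (f : ι → EReal)
    (hbot : ∀ i ∈ s, f i ≠ ⊥) (htop : ∑ i ∈ s, f i ≠ ⊤) :
    ∀ i ∈ s, f i ≠ ⊤ := by
  classical
  intro i hi hcon
  apply htop
  rw [← Finset.add_sum_erase s f hi, hcon]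
  exact EReal.top_add_of_ne_bot
    (my_ereal_sum_ne_bot _ _ fun j hj => hbot j (Finset.mem_of_mem_erase hj))

lemma my_ereal_coe_sum {ι : Type*} (s : Finset ι) (g : ι → ℝ) :
    ((∑ i ∈ s, g i : ℝ) : EReal) = ∑ i ∈ s, (g i : EReal) := by
  classical
  induction s using Finset.induction_on with
  | empty => simp
  | @insert a t hx ih =>
    rw [Finset.sum_insert hx, Finset.sum_insert hx, EReal.coe_add, ih]

lemma my_telescope {E : Type*} [AddCommGroup E] (F : ℕ → E) {a b : ℕ} (hab : a ≤ b) :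
    ∑ h ∈ Finset.Ico a b, (F (h + 1) - F h) = F b - F a := by
  rw [Finset.sum_Ico_eq_sub _ hab, Finset.sum_range_sub, Finset.sum_range_sub]
  abel

lemma my_reindex (a : ℤ → ℝ) (h0 : ∀ h : ℤ, h < 0 → a h = 0) (k τ : ℕ) :
    ∑ i ∈ Finset.range τ, a ((k : ℤ) - τ + i) = ∑ h ∈ Finset.Ico (k - τ) k, a (h : ℤ) := by
  rcases le_or_gt τ k with hk | hk
  · rw [Finset.sum_Ico_eq_sum_range]
    have : k - (k - τ) = τ := by omega
    rw [this]
    apply Finset.sum_congr rfl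
    intro i hi
    congr 1
    have : τ ≤ k := hk
    push_cast [Nat.cast_sub this]
    ring
  · have h1 : k - τ = 0 := by omega
    rw [h1]
    have hk' : k ≤ τ := hk.le
    have hsplit : ∑ i ∈ Finset.range τ, a ((k : ℤ) - τ + i)
        = ∑ i ∈ Finset.Ico 0 (τ - k), a ((k : ℤ) - τ + i)
          + ∑ i ∈ Finset.Ico (τ - k) τ, a ((k : ℤ) - τ + i) := by
      rw [Finset.sum_Ico_consecutive _ (by omega) (by omega), Finset.range_eq_Ico]
    rw [hsplit]
    have hz : ∑ i ∈ Finset.Ico 0 (τ - k), a ((k : ℤ) - τ + i) = 0 := by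
      apply Finset.sum_eq_zero
      intro i hi
      apply h0
      have := (Finset.mem_Ico.mp hi).2
      omega
    rw [hz, zero_add, Finset.sum_Ico_eq_sum_range]
    have h2 : τ - (τ - k) = k := by omega
    rw [h2, Finset.range_eq_Ico]
    apply Finset.sum_congr rfl
    intro i hi
    congr 1
    push_cast [Nat.cast_sub hk']
    ring

lemma sqNorm_nonneg {m : ℕ} {H : Fin m → Type*} [∀ j, NormedAddCommGroup (H j)]
    (x : ∀ j, H j) : 0 ≤ sqNorm x :=
  Finset.sum_nonneg fun j _ => by positivity

lemma sqNorm_sub_single {m : ℕ} {H : Fin m → Type*} [∀ j, NormedAddCommGroup (H j)]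
    (y z : ∀ j, H j) (j0 : Fin m) (h : ∀ i, i ≠ j0 → y i = z i) :
    sqNorm (y - z) = ‖y j0 - z j0‖ ^ 2 := by
  unfold sqNorm
  rw [Fintype.sum_eq_single j0]
  · simp
  · intro i hi
    simp [h i hi]

lemma sqNorm_self {m : ℕ} {H : Fin m → Type*} [∀ j, NormedAddCommGroup (H j)]
    (y : ∀ j, H j) : sqNorm (y - y) = 0 := by
  simp [sqNorm]

lemma sqNorm_sub_apply {m : ℕ} {H : Fin m → Type*} [∀ j, NormedAddCommGroup (H j)]
    (y z : ∀ j, H j) : sqNorm (y - z) = ∑ j, ‖y j - z j‖ ^ 2 := by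
  simp [sqNorm]

lemma ereal_add_coe_ne_top {p : EReal} (hp : p ≠ ⊤) (c : ℝ) : p + (c : EReal) ≠ ⊤ := by
  induction p using EReal.rec with
  | bot => simp
  | coe p => rw [← EReal.coe_add]; exact EReal.coe_ne_top _
  | top => exact absurd rfl hp

lemma my_alg1 (M sρ sτ t : ℝ) (hsτ : 0 < sτ) (hττ : sτ * sτ = t) :
    2 * (M * sρ / (2 * sτ)) * t = M * (sρ * sτ) := by
  rw [← hττ]
  field_simp

lemma my_combine (fk1 fk Idiff Igd nd2 rp r0 Rk1 Rk kk1 kk aW at2 cr Lv gv : ℝ)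
    (h1 : fk1 ≤ fk + (Idiff + Igd) + Lv / 2 * nd2)
    (h2 : rp + (Igd + 1 / (2 * gv) * nd2) ≤ r0)
    (hRs : Rk1 = Rk + rp - r0)
    (hks : kk1 + aW = kk + at2)
    (hcross : Idiff ≤ cr)
    (hag : cr ≤ aW + at2) :
    fk1 + Rk1 + kk1 ≤ fk + Rk + kk + Lv / 2 * nd2 + 2 * at2 - 1 / (2 * gv) * nd2 := by
  linarith

end Aux

set_option maxHeartbeats 4000000 in
theorem stmt_2 {m : ℕ} (hm : 1 ≤ m)
    (H : Fin m → Type*) [∀ j, NormedAddCommGroup (H j)]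
    [∀ j, InnerProductSpace ℝ (H j)] [∀ j, FiniteDimensional ℝ (H j)]
    -- f is C¹
    (f : (∀ j, H j) → ℝ) (hf : ContDiff ℝ 1 f)
    -- each r_j is proper and lower semicontinuous with values in (−∞, +∞]
    (r : ∀ j, H j → EReal)
    (hr_ne_top : ∀ j, ∃ y, r j y ≠ ⊤) (hr_ne_bot : ∀ j y, r j y ≠ ⊥)
    (hr_lsc : ∀ j, LowerSemicontinuous (r j))
    -- Ψ = f + Σ_j r_j, bounded below
    (Ψ : (∀ j, H j) → EReal) (hΨ : ∀ x, Ψ x = (f x : EReal) + ∑ j, r j (x j))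
    (hΨbdd : ∃ B : ℝ, ∀ x, (B : EReal) ≤ Ψ x)
    -- parameters
    (τ ρτ : ℕ) (hτ : 1 ≤ τ) (hρτ1 : 1 ≤ ρτ) (hρττ : ρτ ≤ τ)
    (c M L γmin : ℝ) (hc0 : 0 < c) (hc1 : c < 1) (hM : 0 < M) (hL : 0 < L)
    (hγmin : 0 < γmin)
    -- the iterates, extended by x^h = x^0 for h ≤ 0
    (x : ℤ → ∀ j, H j) (hx0 : ∀ h : ℤ, h ≤ 0 → x h = x 0)
    (hΨx0 : Ψ (x 0) < ⊤)
    -- active blocks and delays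
    (jj : ℕ → Fin m) (d : ℕ → Fin m → ℕ) (hd : ∀ k j, d k j ≤ τ)
    (hcount : ∀ (k : ℕ) (j : Fin m),
      Set.ncard {h : ℕ | k - τ ≤ h ∧ h ≤ k ∧ jj h = j} ≤ ρτ)
    -- the delayed iterate x^{k-d_k}
    (xd : ℕ → ∀ j, H j) (hxd : ∀ (k : ℕ) (j : Fin m), xd k j = x ((k : ℤ) - d k j) j)
    -- stepsizes
    (γ : ℕ → ℝ)
    (hγ : ∀ k, γmin ≤ γ k ∧ γ k ≤ c / (L + 2 * M * Real.sqrt ((ρτ : ℝ) * τ)))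
    -- the update: only block j_k moves, and it moves to a minimizer of the prox-subproblem
    (hoff : ∀ (k : ℕ) (j : Fin m), j ≠ jj k → x ((k : ℤ) + 1) j = x k j)
    (hprox : ∀ (k : ℕ) (y : H (jj k)),
      r (jj k) (x ((k : ℤ) + 1) (jj k)) +
        ((⟪pgrad f (xd k) (jj k) (xd k (jj k)), x ((k : ℤ) + 1) (jj k) - x k (jj k)⟫ +
            (1 / (2 * γ k)) * ‖x ((k : ℤ) + 1) (jj k) - x k (jj k)‖ ^ 2 : ℝ) : EReal) ≤
      r (jj k) y +
        ((⟪pgrad f (xd k) (jj k) (xd k (jj k)), y - x k (jj k)⟫ +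
            (1 / (2 * γ k)) * ‖y - x k (jj k)‖ ^ 2 : ℝ) : EReal))
    -- (i) partial-gradient Lipschitz moduli, bounded by L
    (Lip : ℕ → Fin m → ℝ)
    (hLip : ∀ (k : ℕ) (j : Fin m) (y y' : H j),
      ‖pgrad f (x k) j y - pgrad f (x k) j y'‖ ≤ Lip k j * ‖y - y'‖)
    (hLipL : ∀ k j, Lip k j ≤ L)
    -- (ii) delayed-gradient bound
    (hMd : ∀ k : ℕ,
      ‖pgrad f (x k) (jj k) (x k (jj k)) - pgrad f (xd k) (jj k) (xd k (jj k))‖ ≤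
        M * Real.sqrt (sqNorm (x k - xd k)))
    -- κ_k, the Lyapunov value Φ_k, and the constant C
    (κ : ℕ → ℝ)
    (hκ : ∀ k : ℕ, κ k = (M * Real.sqrt ρτ / (2 * Real.sqrt τ)) *
      ∑ i ∈ Finset.range τ,
        ((i : ℝ) + 1) * sqNorm (x ((k : ℤ) - τ + 1 + i) - x ((k : ℤ) - τ + i)))
    (Φ : ℕ → EReal) (hΦ : ∀ k : ℕ, Φ k = Ψ (x k) + (κ k : EReal))
    (C : ℝ) (hC : C = (1 / 2) * (1 / c - 1) * (L + 2 * M * Real.sqrt ((ρτ : ℝ) * τ))) :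
    Summable (fun k : ℕ => sqNorm (x ((k : ℤ) + 1) - x k)) ∧
    Tendsto (fun k : ℕ => Real.sqrt (sqNorm (x ((k : ℤ) + 1) - x k))) atTop (nhds 0) ∧
    ∃ l : ℝ, Tendsto Φ atTop (nhds (l : EReal)) ∧
      Tendsto (fun k : ℕ => Ψ (x k)) atTop (nhds (l : EReal)) := by
  classical
  obtain ⟨B, hB⟩ := hΨbdd
  -- basic positivity facts
  have hτ0 : (0:ℝ) < (τ : ℝ) := by exact_mod_cast hτ
  have hst : Real.sqrt ((ρτ : ℝ) * τ) = Real.sqrt ρτ * Real.sqrt τ :=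
    Real.sqrt_mul (by positivity) _
  have hstτ : (0:ℝ) < Real.sqrt τ := Real.sqrt_pos.mpr hτ0
  have hD0 : (0:ℝ) < L + 2 * M * Real.sqrt ((ρτ : ℝ) * τ) := by positivity
  have hC0 : 0 < C := by
    rw [hC]
    have h1c : 1 < 1 / c := by rw [lt_div_iff₀ hc0]; linarith
    have h2 : (0:ℝ) < 1 / c - 1 := by linarith
    have := mul_pos (mul_pos (by norm_num : (0:ℝ) < 1/2) h2) hD0
    linarith
  -- shorthand sequences
  set b : ℤ → ℝ := fun h => sqNorm (x (h + 1) - x h) with hbdef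
  set a : ℕ → ℝ := fun k => b (k : ℤ) with hadef
  have ha_nonneg : ∀ k, 0 ≤ a k := fun k => sqNorm_nonneg _
  have hb_nonneg : ∀ h, 0 ≤ b h := fun h => sqNorm_nonneg _
  have hb0 : ∀ h : ℤ, h < 0 → b h = 0 := by
    intro h hh
    have h1 : x (h + 1) = x 0 := hx0 _ (by omega)
    have h2 : x h = x 0 := hx0 _ (by omega)
    rw [hbdef]
    simp only
    rw [h1, h2, sqNorm_self]
  -- finiteness of the r-values along the iterates
  have hfin : ∀ k : ℕ, ∀ j, r j (x (k : ℤ) j) ≠ ⊤ := by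
    intro k
    induction k with
    | zero =>
      have h0 := hΨx0
      rw [hΨ] at h0
      have hsum : ∑ j, r j (x 0 j) ≠ ⊤ := by
        intro hcon
        rw [hcon, EReal.add_top_of_ne_bot (EReal.coe_ne_bot _)] at h0
        exact absurd rfl h0.ne
      intro j
      exact_mod_cast my_ereal_ne_top_of_sum Finset.univ _
        (fun i _ => hr_ne_bot i _) hsum j (Finset.mem_univ j)
    | succ k ih =>
      have hcast : ((k + 1 : ℕ) : ℤ) = (k : ℤ) + 1 := by push_cast; ring
      simp only [hcast]
      intro j
      by_cases hj : j = jj k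
      · subst hj
        have h := hprox k (x (k : ℤ) (jj k))
        have hz : (⟪pgrad f (xd k) (jj k) (xd k (jj k)), x (k : ℤ) (jj k) - x (k : ℤ) (jj k)⟫ +
            (1 / (2 * γ k)) * ‖x (k : ℤ) (jj k) - x (k : ℤ) (jj k)‖ ^ 2 : ℝ) = 0 := by
          simp
        rw [hz] at h
        have hrhs : r (jj k) (x (k : ℤ) (jj k)) + ((0:ℝ) : EReal) ≠ ⊤ :=
          ereal_add_coe_ne_top (ih (jj k)) 0
        have hlhs : r (jj k) (x ((k : ℤ) + 1) (jj k)) +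
            ((⟪pgrad f (xd k) (jj k) (xd k (jj k)), x ((k : ℤ) + 1) (jj k) - x (k : ℤ) (jj k)⟫ +
              (1 / (2 * γ k)) * ‖x ((k : ℤ) + 1) (jj k) - x (k : ℤ) (jj k)‖ ^ 2 : ℝ) : EReal) ≠ ⊤ := by
          intro hcon
          rw [hcon] at h
          exact absurd (top_le_iff.mp h) hrhs
        intro hcon
        apply hlhs
        rw [hcon]
        exact EReal.top_add_of_ne_bot (EReal.coe_ne_bot _)
      · rw [hoff k j hj]
        exact ih j
  -- real-valued quantities
  set R : ℕ → ℝ := fun k => ∑ j, (r j (x (k : ℤ) j)).toReal with hRdef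
  have hΨR : ∀ k : ℕ, Ψ (x (k : ℤ)) = ((f (x (k : ℤ)) + R k : ℝ) : EReal) := by
    intro k
    rw [hΨ, EReal.coe_add, my_ereal_coe_sum]
    congr 1
    apply Finset.sum_congr rfl
    intro j _
    rw [EReal.coe_toReal (hfin k j) (hr_ne_bot j _)]
  have hcast : ∀ n : ℕ, ((n + 1 : ℕ) : ℤ) = (n : ℤ) + 1 := fun n => by push_cast; ring
  -- real prox inequality
  have hprox' : ∀ k : ℕ,
      (r (jj k) (x ((k : ℤ) + 1) (jj k))).toReal
        + (⟪pgrad f (xd k) (jj k) (xd k (jj k)), x ((k : ℤ) + 1) (jj k) - x (k : ℤ) (jj k)⟫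
           + 1 / (2 * γ k) * ‖x ((k : ℤ) + 1) (jj k) - x (k : ℤ) (jj k)‖ ^ 2)
        ≤ (r (jj k) (x (k : ℤ) (jj k))).toReal := by
    intro k
    have h := hprox k (x (k : ℤ) (jj k))
    have hz : (⟪pgrad f (xd k) (jj k) (xd k (jj k)), x (k : ℤ) (jj k) - x (k : ℤ) (jj k)⟫ +
        (1 / (2 * γ k)) * ‖x (k : ℤ) (jj k) - x (k : ℤ) (jj k)‖ ^ 2 : ℝ) = 0 := by simp
    rw [hz] at h
    have hfin1 : r (jj k) (x ((k : ℤ) + 1) (jj k)) ≠ ⊤ := by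
      have := hfin (k + 1) (jj k)
      rwa [hcast k] at this
    rw [← EReal.coe_toReal hfin1 (hr_ne_bot _ _),
      ← EReal.coe_toReal (hfin k (jj k)) (hr_ne_bot _ _), ← EReal.coe_add, ← EReal.coe_add]
      at h
    have h' := EReal.coe_le_coe_iff.mp h
    linarith
  -- change in the sum of r-values
  have hRstep : ∀ k : ℕ, R (k + 1) = R k
      + (r (jj k) (x ((k : ℤ) + 1) (jj k))).toReal
      - (r (jj k) (x (k : ℤ) (jj k))).toReal := by
    intro k
    have e1 : R (k + 1) = (∑ j ∈ Finset.univ.erase (jj k), (r j (x ((k : ℤ)) j)).toReal)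
        + (r (jj k) (x ((k : ℤ) + 1) (jj k))).toReal := by
      simp only [hRdef]
      simp only [hcast]
      rw [← Finset.sum_erase_add Finset.univ _ (Finset.mem_univ (jj k))]
      congr 1
      apply Finset.sum_congr rfl
      intro j hj
      rw [hoff k j (Finset.ne_of_mem_erase hj)]
    have e2 : R k = (∑ j ∈ Finset.univ.erase (jj k), (r j (x ((k : ℤ)) j)).toReal)
        + (r (jj k) (x ((k : ℤ)) (jj k))).toReal := by
      simp only [hRdef]
      rw [← Finset.sum_erase_add Finset.univ _ (Finset.mem_univ (jj k))]
    rw [e1, e2]; ring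
  -- descent inequality for f along the active block
  have hdesc : ∀ k : ℕ, f (x ((k : ℤ) + 1)) ≤ f (x (k : ℤ))
      + ⟪pgrad f (x (k : ℤ)) (jj k) (x (k : ℤ) (jj k)),
          x ((k : ℤ) + 1) (jj k) - x (k : ℤ) (jj k)⟫
      + L / 2 * ‖x ((k : ℤ) + 1) (jj k) - x (k : ℤ) (jj k)‖ ^ 2 := by
    intro k
    set g : H (jj k) → ℝ := fun z => f (Function.update (x (k : ℤ)) (jj k) z) with hgdef
    have hup : Differentiable ℝ (fun z : H (jj k) => Function.update (x (k : ℤ)) (jj k) z) := by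
      apply differentiable_pi.mpr
      intro i
      by_cases hi : i = jj k
      · subst hi
        simp only [Function.update_self]
        exact differentiable_id
      · simp only [Function.update_of_ne hi]
        exact differentiable_const _
    have hg : Differentiable ℝ g := (hf.differentiable one_ne_zero).comp hup
    have hlip' : ∀ z z', ‖gradient g z - gradient g z'‖ ≤ L * ‖z - z'‖ := by
      intro z z'
      refine le_trans (hLip k (jj k) z z') ?_
      exact mul_le_mul_of_nonneg_right (hLipL k (jj k)) (norm_nonneg _)
    have key := my_descent g hg L hlip' (x (k : ℤ) (jj k))
      (x ((k : ℤ) + 1) (jj k) - x (k : ℤ) (jj k))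
    have e1 : x (k : ℤ) (jj k) + (x ((k : ℤ) + 1) (jj k) - x (k : ℤ) (jj k))
        = x ((k : ℤ) + 1) (jj k) := by abel
    have e2 : Function.update (x (k : ℤ)) (jj k) (x ((k : ℤ) + 1) (jj k)) = x ((k : ℤ) + 1) := by
      funext i
      by_cases hi : i = jj k
      · subst hi; rw [Function.update_self]
      · rw [Function.update_of_ne hi, hoff k i hi]
    have e3 : Function.update (x (k : ℤ)) (jj k) (x (k : ℤ) (jj k)) = x (k : ℤ) :=
      Function.update_eq_self _ _
    rw [e1] at key
    simp only [hgdef] at key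
    rw [e2, e3] at key
    exact key
  -- bound on the drift of the delayed iterate
  have hS : ∀ k : ℕ, sqNorm (x (k : ℤ) - xd k)
      ≤ (ρτ : ℝ) * ∑ h ∈ Finset.Ico (k - τ) k, b (h : ℤ) := by
    intro k
    rw [sqNorm_sub_apply]
    have hblock : ∀ j : Fin m, ‖x (k : ℤ) j - xd k j‖ ^ 2
        ≤ (ρτ : ℝ) * ∑ h ∈ Finset.Ico (k - τ) k, ‖x ((h : ℤ) + 1) j - x (h : ℤ) j‖ ^ 2 := by
      intro j
      have hdτ := hd k j
      set n₀ : ℕ := k - d k j with hn0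
      have hn0k : n₀ ≤ k := Nat.sub_le _ _
      have hxeq : xd k j = x (n₀ : ℤ) j := by
        rw [hxd]
        rcases le_or_gt (d k j) k with hdk | hdk
        · congr 2
          omega
        · rw [hx0 ((k : ℤ) - d k j) (by omega), hx0 (n₀ : ℤ) (by omega)]
      have htel : x (k : ℤ) j - xd k j
          = ∑ h ∈ Finset.Ico n₀ k, (x ((h : ℤ) + 1) j - x (h : ℤ) j) := by
        rw [hxeq]
        have ht := my_telescope (fun h : ℕ => x (h : ℤ) j) hn0k
        rw [← ht]
        refine Finset.sum_congr rfl fun h _ => ?_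
        norm_cast
      set s : Finset ℕ := (Finset.Ico n₀ k).filter (fun h => jj h = j) with hsdef
      have hfil : ∑ h ∈ Finset.Ico n₀ k, (x ((h : ℤ) + 1) j - x (h : ℤ) j)
          = ∑ h ∈ s, (x ((h : ℤ) + 1) j - x (h : ℤ) j) := by
        refine (Finset.sum_filter_of_ne ?_).symm
        intro h _ hne
        by_contra hjj
        exact hne (sub_eq_zero_of_eq (hoff h j fun e => hjj e.symm))
      have hcard : (s.card : ℝ) ≤ (ρτ : ℝ) := by
        have hsub : (s : Set ℕ) ⊆ {h : ℕ | k - τ ≤ h ∧ h ≤ k ∧ jj h = j} := by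
          intro h hh
          simp only [hsdef, Finset.coe_filter, Set.mem_setOf_eq, Finset.mem_Ico] at hh
          exact ⟨by omega, by omega, hh.2⟩
        have hfinite : {h : ℕ | k - τ ≤ h ∧ h ≤ k ∧ jj h = j}.Finite :=
          Set.Finite.subset (Set.finite_Icc (k - τ) k)
            (fun h hh => Set.mem_Icc.mpr ⟨hh.1, hh.2.1⟩)
        have h5 := Set.ncard_le_ncard hsub hfinite
        rw [Set.ncard_coe_finset] at h5
        exact_mod_cast le_trans h5 (hcount k j)
      have hCS := my_norm_sum_sq s (fun h => x ((h : ℤ) + 1) j - x (h : ℤ) j)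
      have hmono : ∑ h ∈ s, ‖x ((h : ℤ) + 1) j - x (h : ℤ) j‖ ^ 2
          ≤ ∑ h ∈ Finset.Ico (k - τ) k, ‖x ((h : ℤ) + 1) j - x (h : ℤ) j‖ ^ 2 := by
        apply Finset.sum_le_sum_of_subset_of_nonneg
        · intro h hh
          simp only [hsdef, Finset.mem_filter, Finset.mem_Ico] at hh
          exact Finset.mem_Ico.mpr ⟨by omega, hh.1.2⟩
        · intro h _ _; positivity
      rw [htel, hfil]
      calc ‖∑ h ∈ s, (x ((h : ℤ) + 1) j - x (h : ℤ) j)‖ ^ 2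
          ≤ (s.card : ℝ) * ∑ h ∈ s, ‖x ((h : ℤ) + 1) j - x (h : ℤ) j‖ ^ 2 := hCS
        _ ≤ (ρτ : ℝ) * ∑ h ∈ Finset.Ico (k - τ) k, ‖x ((h : ℤ) + 1) j - x (h : ℤ) j‖ ^ 2 := by
            apply mul_le_mul hcard hmono
              (Finset.sum_nonneg fun _ _ => by positivity) (by positivity)
    calc ∑ j, ‖(x (k : ℤ) - xd k) j‖ ^ 2
        = ∑ j, ‖x (k : ℤ) j - xd k j‖ ^ 2 := rfl
      _ ≤ ∑ j, ((ρτ : ℝ) * ∑ h ∈ Finset.Ico (k - τ) k, ‖x ((h : ℤ) + 1) j - x (h : ℤ) j‖ ^ 2) :=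
          Finset.sum_le_sum fun j _ => hblock j
      _ = (ρτ : ℝ) * ∑ h ∈ Finset.Ico (k - τ) k, b (h : ℤ) := by
          rw [← Finset.mul_sum, Finset.sum_comm]
          rfl
  -- rewrite κ in terms of b
  set α : ℝ := M * Real.sqrt ρτ / (2 * Real.sqrt τ) with hα
  have hα0 : 0 ≤ α := by rw [hα]; positivity
  have hκ' : ∀ k : ℕ, κ k = α * ∑ i ∈ Finset.range τ, ((i : ℝ) + 1) * b ((k : ℤ) - τ + i) := by
    intro k
    rw [hκ]
    congr 1
    refine Finset.sum_congr rfl fun i _ => ?_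
    congr 1
    simp only [hbdef]
    congr 2
    ring
  have hκstep : ∀ k : ℕ,
      κ (k + 1) + α * (∑ i ∈ Finset.range τ, b ((k : ℤ) - τ + i)) = κ k + α * τ * a k := by
    intro k
    set G : ℕ → ℝ := fun i => b ((k : ℤ) - τ + i) with hGdef
    have hGτ : G τ = a k := by
      simp only [hGdef, hadef]
      congr 1
      push_cast; ring
    have e1 : κ (k + 1) = α * ∑ i ∈ Finset.range τ, ((i : ℝ) + 1) * G (i + 1) := by
      rw [hκ' (k + 1)]
      congr 1
      refine Finset.sum_congr rfl fun i _ => ?_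
      congr 1
      simp only [hGdef]
      congr 1
      push_cast; ring
    have e2 : ∑ i ∈ Finset.range τ, ((i : ℝ) + 1) * G (i + 1)
        = (∑ i ∈ Finset.range τ, (i : ℝ) * G i) + τ * G τ := by
      have h3 := Finset.sum_range_succ' (fun i => (i : ℝ) * G i) τ
      rw [Finset.sum_range_succ] at h3
      push_cast at h3
      linarith [h3]
    have e3 : ∑ i ∈ Finset.range τ, ((i : ℝ) + 1) * G i
        = (∑ i ∈ Finset.range τ, (i : ℝ) * G i) + ∑ i ∈ Finset.range τ, G i := by
      rw [← Finset.sum_add_distrib]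
      refine Finset.sum_congr rfl fun i _ => ?_
      ring
    rw [e1, e2, hκ' k, e3, hGτ]
    ring
  -- stepsize bound
  have hγpos : ∀ k, 0 < γ k := fun k => lt_of_lt_of_le hγmin (hγ k).1
  have hγc : ∀ k : ℕ, (L + 2 * M * Real.sqrt ((ρτ : ℝ) * τ)) / c ≤ 1 / γ k := by
    intro k
    have h1 := (hγ k).2
    have h2 := one_div_le_one_div_of_le (hγpos k) h1
    rwa [one_div_div] at h2
  have hττ : Real.sqrt τ * Real.sqrt τ = (τ : ℝ) := Real.mul_self_sqrt hτ0.le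
  have h2ατ : 2 * α * (τ : ℝ) = M * Real.sqrt ((ρτ : ℝ) * τ) := by
    rw [hα, hst]
    exact my_alg1 M _ _ _ hstτ hττ
  -- the Lyapunov sequence
  set u : ℕ → ℝ := fun k => f (x (k : ℤ)) + R k + κ k with hudef
  have hstep : ∀ k : ℕ, u (k + 1) + C * a k ≤ u k := by
    intro k
    set Δ : H (jj k) := x ((k : ℤ) + 1) (jj k) - x (k : ℤ) (jj k) with hΔdef
    have haΔ : a k = ‖Δ‖ ^ 2 := by
      simp only [hadef, hbdef]
      exact sqNorm_sub_single _ _ (jj k) (fun i hi => hoff k i hi)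
    have h1 := hdesc k
    have h2 := hprox' k
    rw [← hΔdef] at h1 h2
    have hRs := hRstep k
    have hκs := hκstep k
    set W : ℝ := ∑ i ∈ Finset.range τ, b ((k : ℤ) - τ + i) with hWdef
    have hW0 : 0 ≤ W := Finset.sum_nonneg fun i _ => hb_nonneg _
    have hW' : sqNorm (x (k : ℤ) - xd k) ≤ (ρτ : ℝ) * W := by
      rw [hWdef, my_reindex b hb0 k τ]
      exact hS k
    have hS0 : 0 ≤ sqNorm (x (k : ℤ) - xd k) := sqNorm_nonneg _
    -- cross term bound
    have hcross : ⟪pgrad f (x (k : ℤ)) (jj k) (x (k : ℤ) (jj k))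
          - pgrad f (xd k) (jj k) (xd k (jj k)), Δ⟫
        ≤ M * Real.sqrt (sqNorm (x (k : ℤ) - xd k)) * ‖Δ‖ := by
      refine le_trans (real_inner_le_norm _ _) ?_
      exact mul_le_mul_of_nonneg_right (hMd k) (norm_nonneg _)
    have hsqS : Real.sqrt (sqNorm (x (k : ℤ) - xd k)) ≤ Real.sqrt ρτ * Real.sqrt W := by
      rw [← Real.sqrt_mul (by positivity) W]
      exact Real.sqrt_le_sqrt hW'
    have hagm : 2 * Real.sqrt τ * (Real.sqrt W * ‖Δ‖) ≤ W + (τ : ℝ) * ‖Δ‖ ^ 2 := by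
      nlinarith [sq_nonneg (Real.sqrt W - Real.sqrt τ * ‖Δ‖), Real.sq_sqrt hW0, hττ]
    have hag : M * Real.sqrt (sqNorm (x (k : ℤ) - xd k)) * ‖Δ‖ ≤ α * W + α * τ * ‖Δ‖ ^ 2 := by
      have hA : M * Real.sqrt (sqNorm (x (k : ℤ) - xd k)) * ‖Δ‖
          ≤ M * Real.sqrt ρτ * (Real.sqrt W * ‖Δ‖) := by
        have := mul_le_mul_of_nonneg_right hsqS (norm_nonneg Δ)
        nlinarith [this, hM.le]
      have hB2 : M * Real.sqrt ρτ = α * (2 * Real.sqrt τ) := by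
        rw [hα]; field_simp
      have hC2 : M * Real.sqrt ρτ * (Real.sqrt W * ‖Δ‖)
          ≤ α * (W + (τ : ℝ) * ‖Δ‖ ^ 2) := by
        rw [hB2, mul_assoc]
        exact mul_le_mul_of_nonneg_left hagm hα0
      calc M * Real.sqrt (sqNorm (x (k : ℤ) - xd k)) * ‖Δ‖
          ≤ M * Real.sqrt ρτ * (Real.sqrt W * ‖Δ‖) := hA
        _ ≤ α * (W + (τ : ℝ) * ‖Δ‖ ^ 2) := hC2
        _ = α * W + α * τ * ‖Δ‖ ^ 2 := by ring
    -- coefficient bound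
    have hcoef : C + L / 2 + M * Real.sqrt ((ρτ : ℝ) * τ) ≤ 1 / (2 * γ k) := by
      have he : C + L / 2 + M * Real.sqrt ((ρτ : ℝ) * τ)
          = ((L + 2 * M * Real.sqrt ((ρτ : ℝ) * τ)) / c) / 2 := by
        rw [hC]; field_simp; ring
      have hh : 1 / (2 * γ k) = (1 / γ k) / 2 := by
        rw [div_div, one_div, one_div, mul_comm]
      rw [he, hh]
      linarith [hγc k]
    -- assemble
    have hsplit : ⟪pgrad f (x (k : ℤ)) (jj k) (x (k : ℤ) (jj k)), Δ⟫
        = ⟪pgrad f (x (k : ℤ)) (jj k) (x (k : ℤ) (jj k))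
            - pgrad f (xd k) (jj k) (xd k (jj k)), Δ⟫
          + ⟪pgrad f (xd k) (jj k) (xd k (jj k)), Δ⟫ := by
      rw [inner_sub_left]; ring
    rw [hsplit] at h1
    rw [haΔ] at hκs
    have hκs' : κ (k + 1) + α * W = κ k + α * τ * ‖Δ‖ ^ 2 := by linarith [hκs]
    have hag2 : M * Real.sqrt (sqNorm (x (k : ℤ) - xd k)) * ‖Δ‖
        ≤ α * W + α * (τ : ℝ) * ‖Δ‖ ^ 2 := hag
    have hcmb := my_combine (f (x ((k : ℤ) + 1))) (f (x (k : ℤ)))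
      (⟪pgrad f (x (k : ℤ)) (jj k) (x (k : ℤ) (jj k))
          - pgrad f (xd k) (jj k) (xd k (jj k)), Δ⟫)
      (⟪pgrad f (xd k) (jj k) (xd k (jj k)), Δ⟫) (‖Δ‖ ^ 2)
      ((r (jj k) (x ((k : ℤ) + 1) (jj k))).toReal)
      ((r (jj k) (x (k : ℤ) (jj k))).toReal)
      (R (k + 1)) (R k) (κ (k + 1)) (κ k) (α * W) (α * (τ : ℝ) * ‖Δ‖ ^ 2)
      (M * Real.sqrt (sqNorm (x (k : ℤ) - xd k)) * ‖Δ‖) L (γ k)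
      h1 h2 hRs hκs' hcross hag2
    have hc3 : C + L / 2 + 2 * α * (τ : ℝ) ≤ 1 / (2 * γ k) := by
      linarith [hcoef, h2ατ]
    have hnn : (0 : ℝ) ≤ ‖Δ‖ ^ 2 := by positivity
    have hprod : (C + L / 2 + 2 * α * (τ : ℝ) - 1 / (2 * γ k)) * ‖Δ‖ ^ 2 ≤ 0 :=
      mul_nonpos_of_nonpos_of_nonneg (by linarith) hnn
    have hcast2 : ((k + 1 : ℕ) : ℤ) = (k : ℤ) + 1 := hcast k
    simp only [hudef, hcast2]
    rw [haΔ]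
    linarith [hcmb, hprod]
  -- lower bound for u, monotonicity
  have hκnn : ∀ k : ℕ, 0 ≤ κ k := by
    intro k
    rw [hκ' k]
    apply mul_nonneg hα0
    apply Finset.sum_nonneg
    intro i _
    have := hb_nonneg ((k : ℤ) - τ + i)
    positivity
  have hub : ∀ k : ℕ, B ≤ u k := by
    intro k
    have h1 := hB (x (k : ℤ))
    rw [hΨR k] at h1
    have h2 : B ≤ f (x (k : ℤ)) + R k := EReal.coe_le_coe_iff.mp h1
    have h3 := hκnn k
    simp only [hudef]
    linarith
  have hanti : ∀ k : ℕ, u (k + 1) ≤ u k := fun k => by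
    linarith [hstep k, mul_nonneg hC0.le (ha_nonneg k)]
  have hAnti : Antitone u := antitone_nat_of_succ_le hanti
  -- summability
  have hpartial : ∀ n : ℕ, ∑ k ∈ Finset.range n, C * a k ≤ u 0 - B := by
    intro n
    have h1 : ∀ n : ℕ, ∑ k ∈ Finset.range n, C * a k ≤ u 0 - u n := by
      intro n
      induction n with
      | zero => simp
      | succ n ih =>
        rw [Finset.sum_range_succ]
        linarith [hstep n]
    linarith [h1 n, hub n]
  have hsummable : Summable (fun k => C * a k) :=
    summable_of_sum_range_le (fun k => mul_nonneg hC0.le (ha_nonneg k)) hpartial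
  have hsa : Summable a := by
    have h2 := hsummable.mul_left C⁻¹
    have h3 : (fun k => C⁻¹ * (C * a k)) = a := by
      funext k; field_simp
    rwa [h3] at h2
  have ha0 : Tendsto a atTop (nhds 0) := hsa.tendsto_atTop_zero
  -- κ tends to zero
  have hκ0 : Tendsto κ atTop (nhds 0) := by
    have hterm : ∀ i : ℕ, Tendsto (fun k : ℕ => b ((k : ℤ) - τ + i)) atTop (nhds 0) := by
      intro i
      have hcomp : Tendsto (fun k : ℕ => a (k - τ + i)) atTop (nhds 0) :=
        ha0.comp ((tendsto_add_atTop_nat i).comp (tendsto_sub_atTop_nat τ))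
      refine Tendsto.congr' ?_ hcomp
      filter_upwards [eventually_ge_atTop τ] with k hk
      show a (k - τ + i) = b ((k : ℤ) - τ + i)
      simp only [hadef]
      congr 1
      omega
    have hsum0 : Tendsto (fun k : ℕ => α * ∑ i ∈ Finset.range τ, ((i : ℝ) + 1) * b ((k : ℤ) - τ + i))
        atTop (nhds (α * ∑ i ∈ Finset.range τ, ((i : ℝ) + 1) * 0)) := by
      apply Tendsto.const_mul
      apply tendsto_finset_sum
      intro i _
      exact (hterm i).const_mul _
    simp only [mul_zero, Finset.sum_const_zero] at hsum0
    exact Tendsto.congr (fun k => (hκ' k).symm) hsum0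
  -- the limit
  have hbdd : BddBelow (Set.range u) := ⟨B, by rintro _ ⟨k, rfl⟩; exact hub k⟩
  have hul : Tendsto u atTop (nhds (⨅ k, u k)) := tendsto_atTop_ciInf hAnti hbdd
  have hΦu : ∀ k : ℕ, Φ k = ((u k : ℝ) : EReal) := by
    intro k
    rw [hΦ, hΨR k]
    simp only [hudef]
    rw [← EReal.coe_add]
  have hΨu : ∀ k : ℕ, Ψ (x (k : ℤ)) = ((u k - κ k : ℝ) : EReal) := by
    intro k
    rw [hΨR k]
    congr 1
    simp only [hudef]
    ring
  refine ⟨hsa, ?_, ⨅ k, u k, ?_, ?_⟩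
  · have hsq : Tendsto (fun k : ℕ => Real.sqrt (a k)) atTop (nhds (Real.sqrt 0)) :=
      (Real.continuous_sqrt.tendsto 0).comp ha0
    rw [Real.sqrt_zero] at hsq
    exact hsq
  · exact Tendsto.congr (fun k => (hΦu k).symm) (EReal.tendsto_coe.mpr hul)
  · have hlim2 : Tendsto (fun k => u k - κ k) atTop (nhds ((⨅ k, u k) - 0)) := hul.sub hκ0
    rw [sub_zero] at hlim2
    exact Tendsto.congr (fun k => (hΨu k).symm) (EReal.tendsto_coe.mpr hlim2)
end

section
/- If x^{k₀+1} ≠ x^{k₀} for some k₀ ∈ ℕ, then lim_{k→∞} Ψ(x^k) ≤ Ψ(x^0) − C‖x^{k₀+1} − x^{k₀}‖² < Ψ(x^0); that is, the limiting objective value is strictly smaller than the initial objective value whenever some update actually moves an iterate. -/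
open Finset Filter RealInnerProductSpace

theorem quad_bound {E : Type*} [NormedAddCommGroup E] [InnerProductSpace ℝ E]
    [CompleteSpace E]
    (g : E → ℝ) (hg : ContDiff ℝ 1 g) (L : ℝ) (hL : 0 ≤ L)
    (hlip : ∀ y y', ‖gradient g y - gradient g y'‖ ≤ L * ‖y - y'‖)
    (a Δ : E) : g (a + Δ) ≤ g a + ⟪gradient g a, Δ⟫ + L / 2 * ‖Δ‖ ^ 2 := by
  set G := fun y => gradient g y with hG
  have hdiff : ∀ y, DifferentiableAt ℝ g y := fun y => (hg.differentiable one_ne_zero) y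
  have hderiv : ∀ t : ℝ, HasDerivAt (fun s : ℝ => g (a + s • Δ)) ⟪G (a + t • Δ), Δ⟫ t := by
    intro t
    have hc : HasDerivAt (fun s : ℝ => a + s • Δ) Δ t := by
      simpa using ((hasDerivAt_id t).smul_const Δ).const_add a
    have hgd : HasFDerivAt g (InnerProductSpace.toDual ℝ E (G (a + t • Δ))) (a + t • Δ) :=
      (hdiff _).hasGradientAt.hasFDerivAt
    have h := hgd.comp_hasDerivAt t hc
    simp only [InnerProductSpace.toDual_apply_apply] at h
    exact h
  have hcont : Continuous fun t : ℝ => ⟪G (a + t • Δ), Δ⟫ := by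
    apply LipschitzWith.continuous (K := Real.toNNReal (L * ‖Δ‖ ^ 2))
    apply LipschitzWith.of_dist_le_mul
    intro t s
    have h1 : ‖G (a + t • Δ) - G (a + s • Δ)‖ ≤ L * (|t - s| * ‖Δ‖) := by
      have h := hlip (a + t • Δ) (a + s • Δ)
      simpa [add_sub_add_left_eq_sub, ← sub_smul, norm_smul] using h
    have h2 : dist (⟪G (a + t • Δ), Δ⟫) (⟪G (a + s • Δ), Δ⟫)
        = |⟪G (a + t • Δ) - G (a + s • Δ), Δ⟫| := by
      rw [Real.dist_eq, ← inner_sub_left]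
    rw [h2]
    have h3 : |⟪G (a + t • Δ) - G (a + s • Δ), Δ⟫| ≤ ‖G (a + t • Δ) - G (a + s • Δ)‖ * ‖Δ‖ :=
      abs_real_inner_le_norm _ _
    have h4 : (Real.toNNReal (L * ‖Δ‖ ^ 2) : ℝ) = L * ‖Δ‖ ^ 2 :=
      Real.coe_toNNReal _ (by positivity)
    rw [h4, Real.dist_eq]
    nlinarith [norm_nonneg Δ, abs_nonneg (t - s), norm_nonneg (G (a + t • Δ) - G (a + s • Δ))]
  have hftc : g (a + Δ) - g a = ∫ t in (0:ℝ)..1, ⟪G (a + t • Δ), Δ⟫ := by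
    have h := intervalIntegral.integral_eq_sub_of_hasDerivAt (f := fun s : ℝ => g (a + s • Δ))
      (fun t _ => hderiv t) (hcont.intervalIntegrable 0 1)
    simpa using h.symm
  have hmono : ∫ t in (0:ℝ)..1, ⟪G (a + t • Δ), Δ⟫ ≤
      ∫ t in (0:ℝ)..1, (⟪G a, Δ⟫ + t * (L * ‖Δ‖ ^ 2)) := by
    apply intervalIntegral.integral_mono_on zero_le_one (hcont.intervalIntegrable 0 1)
      (Continuous.intervalIntegrable (by continuity) 0 1)
    intro t ht
    have h2 : ‖G (a + t • Δ) - G a‖ ≤ L * (t * ‖Δ‖) := by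
      have h := hlip (a + t • Δ) a
      simpa [norm_smul, abs_of_nonneg ht.1] using h
    have h3 : ⟪G (a + t • Δ) - G a, Δ⟫ ≤ ‖G (a + t • Δ) - G a‖ * ‖Δ‖ := real_inner_le_norm _ _
    have h5 : ⟪G (a + t • Δ) - G a, Δ⟫ = ⟪G (a + t • Δ), Δ⟫ - ⟪G a, Δ⟫ := inner_sub_left _ _ _
    nlinarith [norm_nonneg Δ, ht.1]
  have hInt : ∫ t in (0:ℝ)..1, (⟪G a, Δ⟫ + t * (L * ‖Δ‖ ^ 2))
      = ⟪G a, Δ⟫ + L / 2 * ‖Δ‖ ^ 2 := by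
    rw [intervalIntegral.integral_add (intervalIntegrable_const)
      ((Continuous.intervalIntegrable (by continuity) 0 1))]
    simp [intervalIntegral.integral_mul_const, integral_id]
    ring
  nlinarith [hftc, hmono, hInt.le, hInt.ge]

theorem pgrad_quad_bound {m : ℕ} {H : Fin m → Type*} [∀ j, NormedAddCommGroup (H j)]
    [∀ j, InnerProductSpace ℝ (H j)] [∀ j, FiniteDimensional ℝ (H j)]
    (f : (∀ j, H j) → ℝ) (hf : ContDiff ℝ 1 f) (X : ∀ j, H j) (j : Fin m)
    (L : ℝ) (hL : 0 ≤ L)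
    (hlip : ∀ y y', ‖pgrad f X j y - pgrad f X j y'‖ ≤ L * ‖y - y'‖)
    (b : H j) :
    f (Function.update X j b) ≤ f X + ⟪pgrad f X j (X j), b - X j⟫ + L / 2 * ‖b - X j‖ ^ 2 := by
  have hg : ContDiff ℝ 1 (fun z => f (Function.update X j z)) :=
    hf.comp (contDiff_update 1 X j)
  have h := quad_bound (fun z => f (Function.update X j z)) hg L hL hlip (X j) (b - X j)
  simpa only [Function.update_eq_self, add_sub_cancel, pgrad] using h

theorem counting {m τ ρτ : ℕ} {H : Fin m → Type*} [∀ j, NormedAddCommGroup (H j)]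
    (x : ℤ → ∀ j, H j) (hx0 : ∀ h : ℤ, h ≤ 0 → x h = x 0)
    (jj : ℕ → Fin m)
    (hoff : ∀ (k : ℕ) (j : Fin m), j ≠ jj k → x ((k : ℤ) + 1) j = x k j)
    (hcount : ∀ (k : ℕ) (j : Fin m),
      Set.ncard {h : ℕ | k - τ ≤ h ∧ h ≤ k ∧ jj h = j} ≤ ρτ)
    (k : ℕ) (j : Fin m) (dd : ℕ) (hdd : dd ≤ τ) :
    ‖x k j - x ((k:ℤ) - dd) j‖ ^ 2 ≤
      (ρτ : ℝ) * ∑ i ∈ Finset.range τ, ‖x ((k:ℤ) - τ + i + 1) j - x ((k:ℤ) - τ + i) j‖ ^ 2 := by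
  classical
  set F : ℕ → H j := fun i => x ((k:ℤ) - τ + i) j with hF
  set v : ℕ → H j := fun i => F (i+1) - F i with hv
  have htel : x k j - x ((k:ℤ) - dd) j = ∑ i ∈ Finset.Ico (τ - dd) τ, v i := by
    rw [Finset.sum_Ico_eq_sub _ (Nat.sub_le τ dd), Finset.sum_range_sub F, Finset.sum_range_sub F]
    have h1 : F τ = x k j := by
      simp only [hF]; congr 1; push_cast; ring
    have h2 : F (τ - dd) = x ((k:ℤ) - dd) j := by
      simp only [hF]; congr 1; push_cast [hdd]; ring
    rw [h1, h2]; abel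
  set T := (Finset.Ico (τ - dd) τ).filter (fun i => v i ≠ 0) with hT
  have hsumT : ∑ i ∈ Finset.Ico (τ - dd) τ, v i = ∑ i ∈ T, v i :=
    (Finset.sum_filter_of_ne (fun x _ h => h)).symm
  have hkey : ∀ i ∈ T, 0 ≤ (k:ℤ) - τ + i ∧ jj ((k:ℤ) - τ + i).toNat = j := by
    intro i hi
    obtain ⟨hiIco, hvne⟩ := Finset.mem_filter.1 hi
    have hvne' : x ((k:ℤ) - τ + i + 1) j ≠ x ((k:ℤ) - τ + i) j := by
      intro h
      apply hvne
      simp only [hv, hF, sub_eq_zero]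
      rw [show ((k:ℤ) - τ + (i+1:ℕ)) = (k:ℤ) - τ + i + 1 by push_cast; ring, h]
    by_cases hu : 0 ≤ (k:ℤ) - τ + i
    · refine ⟨hu, ?_⟩
      by_contra hne
      apply hvne'
      have := hoff ((k:ℤ) - τ + i).toNat j (fun h => hne h.symm)
      rwa [Int.toNat_of_nonneg hu] at this
    · exfalso
      apply hvne'
      push_neg at hu
      rw [hx0 ((k:ℤ) - τ + i + 1) (by omega), hx0 ((k:ℤ) - τ + i) (by omega)]
  have hinj : Set.InjOn (fun i : ℕ => ((k:ℤ) - τ + i).toNat) T := by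
    intro a ha b hb hab
    have h1 := (hkey a ha).1
    have h2 := (hkey b hb).1
    simp only at hab
    omega
  have hsub : (↑(T.image (fun i : ℕ => ((k:ℤ) - τ + i).toNat)) : Set ℕ) ⊆
      {h : ℕ | k - τ ≤ h ∧ h ≤ k ∧ jj h = j} := by
    intro h hh
    simp only [Finset.coe_image, Set.mem_image, Finset.mem_coe] at hh
    obtain ⟨i, hi, rfl⟩ := hh
    obtain ⟨hu, hjj⟩ := hkey i hi
    have hiIco := (Finset.mem_filter.1 hi).1
    have hilt : i < τ := (Finset.mem_Ico.1 hiIco).2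
    refine ⟨by omega, by omega, hjj⟩
  have hScard : T.card ≤ ρτ := by
    calc T.card = (T.image (fun i : ℕ => ((k:ℤ) - τ + i).toNat)).card :=
          (Finset.card_image_of_injOn hinj).symm
      _ = (↑(T.image (fun i : ℕ => ((k:ℤ) - τ + i).toNat)) : Set ℕ).ncard :=
          (Set.ncard_coe_finset _).symm
      _ ≤ Set.ncard {h : ℕ | k - τ ≤ h ∧ h ≤ k ∧ jj h = j} :=
          Set.ncard_le_ncard hsub ((Set.finite_Iic k).subset (fun h hh => hh.2.1))
      _ ≤ ρτ := hcount k j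
  have hcs : ‖∑ i ∈ T, v i‖ ^ 2 ≤ (T.card : ℝ) * ∑ i ∈ T, ‖v i‖ ^ 2 := by
    calc ‖∑ i ∈ T, v i‖ ^ 2 ≤ (∑ i ∈ T, ‖v i‖) ^ 2 := by
          have := norm_sum_le T v
          nlinarith [norm_nonneg (∑ i ∈ T, v i), Finset.sum_nonneg (fun i (_ : i ∈ T) => norm_nonneg (v i))]
      _ ≤ (T.card : ℝ) * ∑ i ∈ T, ‖v i‖ ^ 2 := by
          exact_mod_cast sq_sum_le_card_mul_sum_sq (s := T) (f := fun i => ‖v i‖)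
  have hTsub : T ⊆ Finset.range τ := fun i hi =>
    Finset.mem_range.2 (Finset.mem_Ico.1 (Finset.mem_filter.1 hi).1).2
  have hmono : ∑ i ∈ T, ‖v i‖ ^ 2 ≤ ∑ i ∈ Finset.range τ, ‖v i‖ ^ 2 :=
    Finset.sum_le_sum_of_subset_of_nonneg hTsub (fun i _ _ => by positivity)
  have hvi : ∀ i, ‖v i‖ ^ 2 = ‖x ((k:ℤ) - τ + i + 1) j - x ((k:ℤ) - τ + i) j‖ ^ 2 := by
    intro i
    simp only [hv, hF]
    congr 3
    push_cast; ring
  calc ‖x k j - x ((k:ℤ) - dd) j‖ ^ 2 = ‖∑ i ∈ T, v i‖ ^ 2 := by rw [htel, hsumT]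
    _ ≤ (T.card : ℝ) * ∑ i ∈ T, ‖v i‖ ^ 2 := hcs
    _ ≤ (ρτ : ℝ) * ∑ i ∈ Finset.range τ, ‖v i‖ ^ 2 := by
        apply mul_le_mul (by exact_mod_cast hScard) hmono
          (Finset.sum_nonneg (fun i _ => by positivity)) (by positivity)
    _ = (ρτ : ℝ) * ∑ i ∈ Finset.range τ, ‖x ((k:ℤ) - τ + i + 1) j - x ((k:ℤ) - τ + i) j‖ ^ 2 := by
        rw [Finset.sum_congr rfl (fun i _ => hvi i)]

open Topology in
set_option maxHeartbeats 2000000 in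
theorem stmt_4 {m : ℕ} (hm : 1 ≤ m)
    (H : Fin m → Type*) [∀ j, NormedAddCommGroup (H j)]
    [∀ j, InnerProductSpace ℝ (H j)] [∀ j, FiniteDimensional ℝ (H j)]
    -- f is C¹
    (f : (∀ j, H j) → ℝ) (hf : ContDiff ℝ 1 f)
    -- each r_j is proper and lower semicontinuous with values in (−∞, +∞]
    (r : ∀ j, H j → EReal)
    (hr_ne_top : ∀ j, ∃ y, r j y ≠ ⊤) (hr_ne_bot : ∀ j y, r j y ≠ ⊥)
    (hr_lsc : ∀ j, LowerSemicontinuous (r j))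
    -- Ψ = f + Σ_j r_j, bounded below
    (Ψ : (∀ j, H j) → EReal) (hΨ : ∀ x, Ψ x = (f x : EReal) + ∑ j, r j (x j))
    (hΨbdd : ∃ B : ℝ, ∀ x, (B : EReal) ≤ Ψ x)
    -- parameters
    (τ ρτ : ℕ) (hτ : 1 ≤ τ) (hρτ1 : 1 ≤ ρτ) (hρττ : ρτ ≤ τ)
    (c M L γmin : ℝ) (hc0 : 0 < c) (hc1 : c < 1) (hM : 0 < M) (hL : 0 < L)
    (hγmin : 0 < γmin)
    -- the iterates, extended by x^h = x^0 for h ≤ 0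
    (x : ℤ → ∀ j, H j) (hx0 : ∀ h : ℤ, h ≤ 0 → x h = x 0)
    (hΨx0 : Ψ (x 0) < ⊤)
    -- active blocks and delays
    (jj : ℕ → Fin m) (d : ℕ → Fin m → ℕ) (hd : ∀ k j, d k j ≤ τ)
    (hcount : ∀ (k : ℕ) (j : Fin m),
      Set.ncard {h : ℕ | k - τ ≤ h ∧ h ≤ k ∧ jj h = j} ≤ ρτ)
    -- the delayed iterate x^{k-d_k}
    (xd : ℕ → ∀ j, H j) (hxd : ∀ (k : ℕ) (j : Fin m), xd k j = x ((k : ℤ) - d k j) j)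
    -- stepsizes
    (γ : ℕ → ℝ)
    (hγ : ∀ k, γmin ≤ γ k ∧ γ k ≤ c / (L + 2 * M * Real.sqrt ((ρτ : ℝ) * τ)))
    -- the update: only block j_k moves, and it moves to a minimizer of the prox-subproblem
    (hoff : ∀ (k : ℕ) (j : Fin m), j ≠ jj k → x ((k : ℤ) + 1) j = x k j)
    (hprox : ∀ (k : ℕ) (y : H (jj k)),
      r (jj k) (x ((k : ℤ) + 1) (jj k)) +
        ((⟪pgrad f (xd k) (jj k) (xd k (jj k)), x ((k : ℤ) + 1) (jj k) - x k (jj k)⟫ +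
            (1 / (2 * γ k)) * ‖x ((k : ℤ) + 1) (jj k) - x k (jj k)‖ ^ 2 : ℝ) : EReal) ≤
      r (jj k) y +
        ((⟪pgrad f (xd k) (jj k) (xd k (jj k)), y - x k (jj k)⟫ +
            (1 / (2 * γ k)) * ‖y - x k (jj k)‖ ^ 2 : ℝ) : EReal))
    -- (i) partial-gradient Lipschitz moduli, bounded by L
    (Lip : ℕ → Fin m → ℝ)
    (hLip : ∀ (k : ℕ) (j : Fin m) (y y' : H j),
      ‖pgrad f (x k) j y - pgrad f (x k) j y'‖ ≤ Lip k j * ‖y - y'‖)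
    (hLipL : ∀ k j, Lip k j ≤ L)
    -- (ii) delayed-gradient bound
    (hMd : ∀ k : ℕ,
      ‖pgrad f (x k) (jj k) (x k (jj k)) - pgrad f (xd k) (jj k) (xd k (jj k))‖ ≤
        M * Real.sqrt (sqNorm (x k - xd k)))
    -- κ_k, the Lyapunov value Φ_k, and the constant C
    (κ : ℕ → ℝ)
    (hκ : ∀ k : ℕ, κ k = (M * Real.sqrt ρτ / (2 * Real.sqrt τ)) *
      ∑ i ∈ Finset.range τ,
        ((i : ℝ) + 1) * sqNorm (x ((k : ℤ) - τ + 1 + i) - x ((k : ℤ) - τ + i)))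
    (Φ : ℕ → EReal) (hΦ : ∀ k : ℕ, Φ k = Ψ (x k) + (κ k : EReal))
    (C : ℝ) (hC : C = (1 / 2) * (1 / c - 1) * (L + 2 * M * Real.sqrt ((ρτ : ℝ) * τ)))
    (k₀ : ℕ) (hmove : x ((k₀ : ℤ) + 1) ≠ x k₀) :
    ∃ l : EReal, Tendsto (fun k : ℕ => Ψ (x k)) atTop (nhds l) ∧
      l ≤ Ψ (x 0) - ((C * sqNorm (x ((k₀ : ℤ) + 1) - x k₀) : ℝ) : EReal) ∧
      Ψ (x 0) - ((C * sqNorm (x ((k₀ : ℤ) + 1) - x k₀) : ℝ) : EReal) < Ψ (x 0) := by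
  classical
  obtain ⟨B, hB⟩ := hΨbdd
  -- constants
  set S : ℝ := L + 2 * M * Real.sqrt ((ρτ : ℝ) * τ) with hSdef
  have hτR : (0:ℝ) < τ := by exact_mod_cast hτ
  have hρR : (0:ℝ) < ρτ := by exact_mod_cast hρτ1
  have hsτ : (0:ℝ) < Real.sqrt τ := Real.sqrt_pos.2 hτR
  have hsρ : (0:ℝ) < Real.sqrt ρτ := Real.sqrt_pos.2 hρR
  have hτsq : Real.sqrt τ * Real.sqrt τ = (τ:ℝ) := Real.mul_self_sqrt hτR.le
  have hρsq : Real.sqrt ρτ * Real.sqrt ρτ = (ρτ:ℝ) := Real.mul_self_sqrt hρR.le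
  set η : ℝ := Real.sqrt ((ρτ : ℝ) * τ) with hηdef
  have hη : η = Real.sqrt ρτ * Real.sqrt τ := Real.sqrt_mul hρR.le _
  have hηpos : 0 < η := by rw [hη]; positivity
  have hSpos : 0 < S := by rw [hSdef]; have := Real.sqrt_nonneg ((ρτ : ℝ) * τ); nlinarith
  have hCpos : 0 < C := by
    rw [hC]
    have h1 : 1 < 1 / c := by rw [lt_div_iff₀ hc0]; linarith
    have : (0:ℝ) < 1/c - 1 := by linarith
    have : (0:ℝ) < L + 2 * M * Real.sqrt ((ρτ : ℝ) * τ) := hSpos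
    positivity
  set c₀ : ℝ := M * Real.sqrt ρτ / (2 * Real.sqrt τ) with hc₀def
  have hc₀pos : 0 < c₀ := by rw [hc₀def]; positivity
  -- D and σ
  set D : ℤ → ℝ := fun h => sqNorm (x (h+1) - x h) with hDdef
  have hDnn : ∀ h, 0 ≤ D h := fun h => Finset.sum_nonneg (fun j _ => by positivity)
  have hD0 : ∀ h : ℤ, h < 0 → D h = 0 := by
    intro h hh
    simp only [hDdef]
    rw [hx0 (h+1) (by omega), hx0 h (by omega), sub_self]
    simp [sqNorm]
  set σ : ℕ → ℝ := fun k => ∑ i ∈ Finset.range τ, D ((k:ℤ) - τ + i) with hσdef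
  have hσnn : ∀ k, 0 ≤ σ k := fun k => Finset.sum_nonneg (fun i _ => hDnn _)
  -- κ in terms of D
  have hκD : ∀ k : ℕ, κ k = c₀ * ∑ i ∈ Finset.range τ, ((i:ℝ)+1) * D ((k:ℤ) - τ + i) := by
    intro k
    rw [hκ k]
    congr 1
    apply Finset.sum_congr rfl
    intro i _
    congr 1
    simp only [hDdef]
    rw [show (k:ℤ) - τ + 1 + i = ((k:ℤ) - τ + i) + 1 by ring]
  have hκnn : ∀ k, 0 ≤ κ k := by
    intro k
    rw [hκD k]
    apply mul_nonneg hc₀pos.le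
    apply Finset.sum_nonneg
    intro i _
    have := hDnn ((k:ℤ) - τ + i)
    positivity
  have hκ0 : κ 0 = 0 := by
    rw [hκD 0]
    rw [Finset.sum_eq_zero, mul_zero]
    intro i hi
    have hi' := Finset.mem_range.1 hi
    rw [hD0 _ (by push_cast; omega), mul_zero]
  -- κ recursion
  have hκrec : ∀ k : ℕ, κ (k+1) = κ k + c₀ * (τ * D k - σ k) := by
    intro k
    set G : ℕ → ℝ := fun i => (i:ℝ) * D ((k:ℤ) - τ + i) with hG
    have h1 : κ (k+1) = c₀ * ∑ i ∈ Finset.range τ, G (i+1) := by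
      rw [hκD (k+1)]
      congr 1
      apply Finset.sum_congr rfl
      intro i _
      simp only [hG]
      push_cast
      rw [show (k:ℤ) + 1 - τ + i = (k:ℤ) - τ + (i + 1) by ring]
    have h3 := Finset.sum_range_succ' G τ
    have h4 := Finset.sum_range_succ G τ
    have hG0 : G 0 = 0 := by simp [hG]
    have hGτ : G τ = τ * D k := by
      simp only [hG]
      rw [show (k:ℤ) - τ + τ = (k:ℤ) by ring]
    have h5 : κ k = c₀ * (∑ i ∈ Finset.range τ, G i + σ k) := by
      rw [hκD k, hσdef, ← Finset.sum_add_distrib]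
      congr 1
      apply Finset.sum_congr rfl
      intro i _
      simp only [hG]
      ring
    have h6 : ∑ i ∈ Finset.range τ, G (i+1) = ∑ i ∈ Finset.range τ, G i + τ * D k := by
      linarith [h3, h4, hG0, hGτ]
    rw [h1, h6, h5]; ring
  -- W bound via counting
  have hW : ∀ k : ℕ, sqNorm (x k - xd k) ≤ (ρτ:ℝ) * σ k := by
    intro k
    have hb : ∀ j, ‖x (k:ℤ) j - xd k j‖ ^ 2 ≤
        (ρτ:ℝ) * ∑ i ∈ Finset.range τ, ‖x ((k:ℤ) - τ + i + 1) j - x ((k:ℤ) - τ + i) j‖ ^ 2 := by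
      intro j
      rw [hxd k j]
      exact counting x hx0 jj hoff hcount k j (d k j) (hd k j)
    calc sqNorm (x (k:ℤ) - xd k) = ∑ j, ‖x (k:ℤ) j - xd k j‖ ^ 2 := by
          simp [sqNorm]
      _ ≤ ∑ j, (ρτ:ℝ) * ∑ i ∈ Finset.range τ, ‖x ((k:ℤ) - τ + i + 1) j - x ((k:ℤ) - τ + i) j‖ ^ 2 :=
          Finset.sum_le_sum (fun j _ => hb j)
      _ = (ρτ:ℝ) * σ k := by
          rw [← Finset.mul_sum]
          congr 1
          rw [Finset.sum_comm]
          apply Finset.sum_congr rfl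
          intro i _
          simp only [hσdef, hDdef, sqNorm, Pi.sub_apply]
  -- D k is the squared norm of the active move
  have hδ : ∀ k : ℕ, D k = ‖x ((k:ℤ)+1) (jj k) - x (k:ℤ) (jj k)‖ ^ 2 := by
    intro k
    simp only [hDdef, sqNorm]
    rw [Finset.sum_eq_single (jj k)]
    · simp
    · intro j _ hj
      rw [Pi.sub_apply, hoff k j hj, sub_self]
      simp
    · intro h
      exact absurd (Finset.mem_univ _) h
  -- the key real inequality
  have hstepR' : ∀ k : ℕ,
      f (x ((k:ℤ)+1)) + (κ (k+1) + C * D k - κ k) ≤ f (x (k:ℤ)) +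
        (⟪pgrad f (xd k) (jj k) (xd k (jj k)), x ((k:ℤ)+1) (jj k) - x (k:ℤ) (jj k)⟫ +
          (1 / (2 * γ k)) * ‖x ((k:ℤ)+1) (jj k) - x (k:ℤ) (jj k)‖ ^ 2) := by
    intro k
    set Δ : H (jj k) := x ((k:ℤ)+1) (jj k) - x (k:ℤ) (jj k) with hΔdef
    set gk : H (jj k) := pgrad f (x (k:ℤ)) (jj k) (x (k:ℤ) (jj k)) with hgk
    set gd : H (jj k) := pgrad f (xd k) (jj k) (xd k (jj k)) with hgd
    -- quadratic upper bound
    have hupd : Function.update (x (k:ℤ)) (jj k) (x ((k:ℤ)+1) (jj k)) = x ((k:ℤ)+1) := by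
      funext j
      by_cases hj : j = jj k
      · subst hj; rw [Function.update_self]
      · rw [Function.update_of_ne hj, hoff k j hj]
    have hquad : f (x ((k:ℤ)+1)) ≤ f (x (k:ℤ)) + ⟪gk, Δ⟫ + L / 2 * ‖Δ‖ ^ 2 := by
      have h := pgrad_quad_bound f hf (x (k:ℤ)) (jj k) L hL.le
        (fun y y' => (hLip k (jj k) y y').trans
          (mul_le_mul_of_nonneg_right (hLipL k (jj k)) (norm_nonneg _)))
        (x ((k:ℤ)+1) (jj k))
      rwa [hupd] at h
    -- inner product bound
    have hinner : ⟪gk, Δ⟫ - ⟪gd, Δ⟫ ≤ c₀ * σ k + M * η / 2 * ‖Δ‖ ^ 2 := by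
      have h1 : ⟪gk - gd, Δ⟫ ≤ ‖gk - gd‖ * ‖Δ‖ := real_inner_le_norm _ _
      have h2 : ‖gk - gd‖ ≤ M * Real.sqrt (sqNorm (x (k:ℤ) - xd k)) := hMd k
      set A : ℝ := Real.sqrt (sqNorm (x (k:ℤ) - xd k)) with hA
      have hAnn : 0 ≤ A := Real.sqrt_nonneg _
      have hWnn : (0:ℝ) ≤ sqNorm (x (k:ℤ) - xd k) := Finset.sum_nonneg (fun j _ => by positivity)
      have hA2 : A ^ 2 ≤ (ρτ:ℝ) * σ k := by
        rw [hA, Real.sq_sqrt hWnn]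
        exact hW k
      have e0 : c₀ * η = M * (ρτ:ℝ) / 2 := by
        rw [hc₀def, hη, div_mul_eq_mul_div, div_eq_div_iff (by positivity) two_ne_zero]
        linear_combination (2 * M * Real.sqrt τ) * hρsq
      have hρM : (ρτ:ℝ) * M = 2 * (c₀ * η) := by linarith
      have key : (ρτ:ℝ) * (M * A * ‖Δ‖) ≤ c₀ * A ^ 2 + (ρτ:ℝ) * (M * η / 2 * ‖Δ‖ ^ 2) := by
        have hq : 0 ≤ c₀ * (A - η * ‖Δ‖) ^ 2 := mul_nonneg hc₀pos.le (sq_nonneg _)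
        have hexp : c₀ * (A - η * ‖Δ‖) ^ 2
            = c₀ * A ^ 2 + (c₀ * η) * (η * ‖Δ‖ ^ 2) - 2 * ((c₀ * η) * (A * ‖Δ‖)) := by ring
        have l1 : (ρτ:ℝ) * (M * A * ‖Δ‖) = ((ρτ:ℝ) * M) * (A * ‖Δ‖) := by ring
        rw [hρM] at l1
        have l2 : (ρτ:ℝ) * (M * η / 2 * ‖Δ‖ ^ 2) = ((ρτ:ℝ) * M) * (η / 2 * ‖Δ‖ ^ 2) := by ring
        rw [hρM] at l2
        have l2' : 2 * (c₀ * η) * (η / 2 * ‖Δ‖ ^ 2) = (c₀ * η) * (η * ‖Δ‖ ^ 2) := by ring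
        rw [l2'] at l2
        linarith [hq, hexp, l1, l2]
      have h3 : M * A * ‖Δ‖ ≤ c₀ * σ k + M * η / 2 * ‖Δ‖ ^ 2 := by
        have h4 : c₀ * A ^ 2 ≤ c₀ * ((ρτ:ℝ) * σ k) := mul_le_mul_of_nonneg_left hA2 hc₀pos.le
        have h5 : (ρτ:ℝ) * (M * A * ‖Δ‖) ≤ (ρτ:ℝ) * (c₀ * σ k + M * η / 2 * ‖Δ‖ ^ 2) := by
          have hr : (ρτ:ℝ) * (c₀ * σ k + M * η / 2 * ‖Δ‖ ^ 2)
              = c₀ * ((ρτ:ℝ) * σ k) + (ρτ:ℝ) * (M * η / 2 * ‖Δ‖ ^ 2) := by ring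
          rw [hr]
          linarith [key, h4]
        exact le_of_mul_le_mul_left h5 hρR
      have h6 : ⟪gk - gd, Δ⟫ ≤ M * A * ‖Δ‖ := by
        calc ⟪gk - gd, Δ⟫ ≤ ‖gk - gd‖ * ‖Δ‖ := h1
          _ ≤ M * A * ‖Δ‖ := mul_le_mul_of_nonneg_right h2 (norm_nonneg _)
      have h7 : ⟪gk - gd, Δ⟫ = ⟪gk, Δ⟫ - ⟪gd, Δ⟫ := inner_sub_left _ _ _
      linarith
    -- stepsize bound
    have hγpos : 0 < γ k := lt_of_lt_of_le hγmin (hγ k).1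
    have hβ : S / (2*c) ≤ 1 / (2 * γ k) := by
      have h : γ k ≤ c / S := (hγ k).2
      have h' : γ k * S ≤ c := (le_div_iff₀ hSpos).1 h
      rw [div_le_div_iff₀ (by positivity) (by positivity)]
      nlinarith
    have e1 : c₀ * τ = M * η / 2 := by
      rw [hc₀def, hη, div_mul_eq_mul_div, div_eq_div_iff (by positivity) two_ne_zero]
      linear_combination (-2 * M * Real.sqrt ρτ) * hτsq
    have e2 : L/2 + M * η + C = S / (2*c) := by
      have hcne : c ≠ 0 := ne_of_gt hc0
      have hcc : c * (1/c) = 1 := by field_simp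
      rw [hC, hSdef, eq_div_iff (ne_of_gt (by positivity : (0:ℝ) < 2*c))]
      linear_combination (L + 2*M*η) * hcc
    have hconst : L/2 + M * η / 2 + c₀ * τ + C ≤ 1 / (2 * γ k) := by
      rw [e1]
      calc L/2 + M * η / 2 + M * η / 2 + C = L/2 + M * η + C := by ring
        _ = S / (2*c) := e2
        _ ≤ 1 / (2 * γ k) := hβ
    have hmul : (L/2 + M * η / 2 + c₀ * τ + C) * D k ≤ (1 / (2 * γ k)) * D k :=
      mul_le_mul_of_nonneg_right hconst (hDnn k)
    have hrec := hκrec k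
    have hδk : D (k:ℤ) = ‖Δ‖ ^ 2 := hδ k
    have m1 : (1 / (2 * γ k)) * D (k:ℤ) = (1 / (2 * γ k)) * ‖Δ‖ ^ 2 := by rw [hδk]
    have m2 : L/2 * D (k:ℤ) = L/2 * ‖Δ‖ ^ 2 := by rw [hδk]
    have m3 : M * η / 2 * D (k:ℤ) = M * η / 2 * ‖Δ‖ ^ 2 := by rw [hδk]
    linarith [hquad, hinner, hrec, hmul, m1, m2, m3]
  -- EReal step inequality
  have hstepE : ∀ k : ℕ, Ψ (x (((k+1):ℕ):ℤ)) + ((κ (k+1) + C * D (k:ℤ) - κ k : ℝ) : EReal) ≤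
      Ψ (x (k:ℤ)) := by
    intro k
    have hcast : (((k+1):ℕ):ℤ) = (k:ℤ) + 1 := by push_cast; ring
    rw [hcast]
    set q : ℝ := ⟪pgrad f (xd k) (jj k) (xd k (jj k)), x ((k:ℤ)+1) (jj k) - x (k:ℤ) (jj k)⟫ +
      (1 / (2 * γ k)) * ‖x ((k:ℤ)+1) (jj k) - x (k:ℤ) (jj k)‖ ^ 2 with hqdef
    have hproxk := hprox k (x (k:ℤ) (jj k))
    have h0 : (⟪pgrad f (xd k) (jj k) (xd k (jj k)), x (k:ℤ) (jj k) - x (k:ℤ) (jj k)⟫ +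
        (1 / (2 * γ k)) * ‖x (k:ℤ) (jj k) - x (k:ℤ) (jj k)‖ ^ 2 : ℝ) = 0 := by
      simp
    rw [h0] at hproxk
    rw [EReal.coe_zero, add_zero] at hproxk
    have hsplit : ∀ z : ∀ j, H j, ∑ j, r j (z j) =
        r (jj k) (z (jj k)) + ∑ j ∈ Finset.univ.erase (jj k), r j (z j) :=
      fun z => (Finset.add_sum_erase _ _ (Finset.mem_univ _)).symm
    have hΨ1 : Ψ (x ((k:ℤ)+1)) = (f (x ((k:ℤ)+1)) : EReal) +
        (r (jj k) (x ((k:ℤ)+1) (jj k)) + ∑ j ∈ Finset.univ.erase (jj k), r j (x (k:ℤ) j)) := by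
      rw [hΨ, hsplit]
      congr 2
      apply Finset.sum_congr rfl
      intro j hj
      rw [hoff k j (Finset.ne_of_mem_erase hj)]
    have hΨ2 : Ψ (x (k:ℤ)) = (f (x (k:ℤ)) : EReal) +
        (r (jj k) (x (k:ℤ) (jj k)) + ∑ j ∈ Finset.univ.erase (jj k), r j (x (k:ℤ) j)) := by
      rw [hΨ, hsplit]
    have hstar : f (x ((k:ℤ)+1)) + (κ (k+1) + C * D (k:ℤ) - κ k) ≤ f (x (k:ℤ)) + q := hstepR' k
    rw [hΨ1, hΨ2]
    calc (f (x ((k:ℤ)+1)) : EReal) +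
          (r (jj k) (x ((k:ℤ)+1) (jj k)) + ∑ j ∈ Finset.univ.erase (jj k), r j (x (k:ℤ) j)) +
          ((κ (k+1) + C * D (k:ℤ) - κ k : ℝ) : EReal)
        = ((f (x ((k:ℤ)+1)) + (κ (k+1) + C * D (k:ℤ) - κ k) : ℝ) : EReal) +
          (r (jj k) (x ((k:ℤ)+1) (jj k)) + ∑ j ∈ Finset.univ.erase (jj k), r j (x (k:ℤ) j)) := by
          rw [EReal.coe_add, add_right_comm]
      _ ≤ ((f (x (k:ℤ)) + q : ℝ) : EReal) +
          (r (jj k) (x ((k:ℤ)+1) (jj k)) + ∑ j ∈ Finset.univ.erase (jj k), r j (x (k:ℤ) j)) := by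
          exact add_le_add_left (EReal.coe_le_coe_iff.2 hstar) _
      _ = (f (x (k:ℤ)) : EReal) +
          (((q : EReal) + r (jj k) (x ((k:ℤ)+1) (jj k))) +
            ∑ j ∈ Finset.univ.erase (jj k), r j (x (k:ℤ) j)) := by
          rw [EReal.coe_add, add_assoc, ← add_assoc (q : EReal)]
      _ ≤ (f (x (k:ℤ)) : EReal) +
          (r (jj k) (x (k:ℤ) (jj k)) + ∑ j ∈ Finset.univ.erase (jj k), r j (x (k:ℤ) j)) := by
          apply add_le_add_right
          apply add_le_add_left
          rw [add_comm]
          exact hproxk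
  -- finiteness
  have hfin : ∀ k : ℕ, Ψ (x (k:ℤ)) ≠ ⊤ := by
    intro k
    induction k with
    | zero => simpa using hΨx0.ne
    | succ n ih =>
      intro htop
      have h := hstepE n
      rw [htop, EReal.top_add_coe] at h
      exact ih (top_le_iff.1 h)
  have hbot : ∀ y, Ψ y ≠ ⊥ := fun y => (lt_of_lt_of_le (EReal.bot_lt_coe B) (hB y)).ne'
  set ψf : ℕ → ℝ := fun k => (Ψ (x (k:ℤ))).toReal with hψf
  have hψeq : ∀ k : ℕ, Ψ (x (k:ℤ)) = ((ψf k : ℝ) : EReal) := fun k =>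
    (EReal.coe_toReal (hfin k) (hbot _)).symm
  have hstepR : ∀ k : ℕ, ψf (k+1) + (κ (k+1) + C * D (k:ℤ) - κ k) ≤ ψf k := by
    intro k
    have h := hstepE k
    rw [hψeq (k+1), hψeq k, ← EReal.coe_add] at h
    exact_mod_cast h
  have hBψ : ∀ k, B ≤ ψf k := fun k => by
    have h := hB (x (k:ℤ))
    rw [hψeq k] at h
    exact_mod_cast h
  set φf : ℕ → ℝ := fun k => ψf k + κ k with hφf
  have hstepφ : ∀ k, φf (k+1) + C * D (k:ℤ) ≤ φf k := by
    intro k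
    have := hstepR k
    simp only [hφf]
    linarith
  have hφanti : Antitone φf := antitone_nat_of_succ_le (fun k => by
    have h1 := hstepφ k
    have h2 : 0 ≤ C * D (k:ℤ) := mul_nonneg hCpos.le (hDnn _)
    linarith)
  have hφlb : ∀ k, B ≤ φf k := fun k => by
    have h1 := hBψ k
    have h2 := hκnn k
    simp only [hφf]
    linarith
  have hbdd : BddBelow (Set.range φf) := ⟨B, fun y hy => by obtain ⟨k, rfl⟩ := hy; exact hφlb k⟩
  have hφlim : Tendsto φf atTop (𝓝 (⨅ k, φf k)) := tendsto_atTop_ciInf hφanti hbdd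
  set l₀ : ℝ := ⨅ k, φf k with hl₀
  -- summability of the step sizes
  have hpartial : ∀ n : ℕ, ∑ i ∈ Finset.range n, C * D (i:ℤ) ≤ φf 0 - B := by
    intro n
    have htel : ∑ i ∈ Finset.range n, C * D (i:ℤ) ≤ φf 0 - φf n := by
      induction n with
      | zero => simp
      | succ p ih =>
        rw [Finset.sum_range_succ]
        have := hstepφ p
        linarith
    have h2 := hφlb n
    linarith
  have hsummable : Summable (fun i : ℕ => C * D (i:ℤ)) :=
    summable_of_sum_range_le (fun n => mul_nonneg hCpos.le (hDnn _)) hpartial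
  have hCD0 : Tendsto (fun i : ℕ => C * D (i:ℤ)) atTop (𝓝 0) := hsummable.tendsto_atTop_zero
  have hD0' : Tendsto (fun i : ℕ => D (i:ℤ)) atTop (𝓝 0) := by
    have h := hCD0.const_mul (1/C)
    rw [mul_zero] at h
    have heq : (fun i : ℕ => (1/C) * (C * D (i:ℤ))) = fun i : ℕ => D (i:ℤ) := by
      funext i
      field_simp
    rwa [heq] at h
  have hκlim : Tendsto κ atTop (𝓝 0) := by
    have hκfun : κ = fun k : ℕ => c₀ * ∑ i ∈ Finset.range τ, ((i:ℝ)+1) * D ((k:ℤ) - τ + i) :=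
      funext hκD
    have hsumlim : Tendsto (fun k : ℕ => ∑ i ∈ Finset.range τ, ((i:ℝ)+1) * D ((k:ℤ) - τ + i))
        atTop (𝓝 (∑ i ∈ Finset.range τ, ((i:ℝ)+1) * 0)) := by
      apply tendsto_finset_sum
      intro i _
      apply Tendsto.const_mul
      have hcomp : Tendsto (fun k : ℕ => k - τ + i) atTop atTop :=
        tendsto_atTop_atTop.2 (fun b => ⟨b + τ, fun a ha => by omega⟩)
      have h := hD0'.comp hcomp
      apply h.congr'
      filter_upwards [eventually_ge_atTop τ] with k hk
      show D (((k - τ + i : ℕ)):ℤ) = D ((k:ℤ) - τ + i)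
      congr 1
      omega
    rw [hκfun]
    simpa using hsumlim.const_mul c₀
  have hψlim : Tendsto ψf atTop (𝓝 l₀) := by
    have heq : ψf = fun k => φf k - κ k := by
      funext k
      simp only [hφf]
      ring
    rw [heq]
    simpa using hφlim.sub hκlim
  have hψ0 : Ψ (x 0) = ((ψf 0 : ℝ) : EReal) := by
    have h := hψeq 0
    simpa using h
  have hDk : D (k₀:ℤ) = sqNorm (x ((k₀:ℤ)+1) - x (k₀:ℤ)) := by rw [hDdef]
  refine ⟨(l₀ : EReal), ?_, ?_, ?_⟩
  · have heq : (fun k : ℕ => Ψ (x (k:ℤ))) = fun k => ((ψf k : ℝ) : EReal) := funext hψeq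
    rw [heq]
    exact EReal.tendsto_coe.2 hψlim
  · have h1 : l₀ ≤ φf (k₀+1) := ciInf_le hbdd (k₀+1)
    have h2 := hstepφ k₀
    have h3 : φf k₀ ≤ φf 0 := hφanti (Nat.zero_le _)
    have h4 : φf 0 = ψf 0 := by
      simp only [hφf, hκ0]
      ring
    have h5 : l₀ ≤ ψf 0 - C * D (k₀:ℤ) := by linarith
    rw [hψ0, ← hDk, ← EReal.coe_sub]
    exact EReal.coe_le_coe_iff.2 h5
  · have hDpos : 0 < D (k₀:ℤ) := by
      simp only [hDdef, sqNorm]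
      obtain ⟨j, hj⟩ := Function.ne_iff.1 hmove
      apply Finset.sum_pos' (fun i _ => by positivity)
      refine ⟨j, Finset.mem_univ j, ?_⟩
      have hne : (x ((k₀:ℤ)+1) - x (k₀:ℤ)) j ≠ 0 := by
        rw [Pi.sub_apply]
        exact sub_ne_zero.2 hj
      exact pow_pos (norm_pos_iff.2 hne) 2
    rw [hψ0, ← hDk, ← EReal.coe_sub]
    apply EReal.coe_lt_coe_iff.2
    nlinarith [mul_pos hCpos hDpos]
end

section
/- For every k ∈ ℕ the weighted-increment terms satisfy the recursion κ_{k+1} ≤ κ_k − ⟨∇_{j_k} f(x^k) − ∇_{j_k} f(x^{k−d_k}), x^{k+1}_{j_k} − x^k_{j_k}⟩ + M√(ρ_τ τ)‖x^{k+1}_{j_k} − x^k_{j_k}‖². -/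
open Finset Filter RealInnerProductSpace

theorem stmt_5 {m : ℕ} (hm : 1 ≤ m)
    (H : Fin m → Type*) [∀ j, NormedAddCommGroup (H j)]
    [∀ j, InnerProductSpace ℝ (H j)] [∀ j, FiniteDimensional ℝ (H j)]
    -- f is C¹
    (f : (∀ j, H j) → ℝ) (hf : ContDiff ℝ 1 f)
    -- each r_j is proper and lower semicontinuous with values in (−∞, +∞]
    (r : ∀ j, H j → EReal)
    (hr_ne_top : ∀ j, ∃ y, r j y ≠ ⊤) (hr_ne_bot : ∀ j y, r j y ≠ ⊥)
    (hr_lsc : ∀ j, LowerSemicontinuous (r j))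
    -- Ψ = f + Σ_j r_j, bounded below
    (Ψ : (∀ j, H j) → EReal) (hΨ : ∀ x, Ψ x = (f x : EReal) + ∑ j, r j (x j))
    (hΨbdd : ∃ B : ℝ, ∀ x, (B : EReal) ≤ Ψ x)
    -- parameters
    (τ ρτ : ℕ) (hτ : 1 ≤ τ) (hρτ1 : 1 ≤ ρτ) (hρττ : ρτ ≤ τ)
    (c M L γmin : ℝ) (hc0 : 0 < c) (hc1 : c < 1) (hM : 0 < M) (hL : 0 < L)
    (hγmin : 0 < γmin)
    -- the iterates, extended by x^h = x^0 for h ≤ 0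
    (x : ℤ → ∀ j, H j) (hx0 : ∀ h : ℤ, h ≤ 0 → x h = x 0)
    (hΨx0 : Ψ (x 0) < ⊤)
    -- active blocks and delays
    (jj : ℕ → Fin m) (d : ℕ → Fin m → ℕ) (hd : ∀ k j, d k j ≤ τ)
    (hcount : ∀ (k : ℕ) (j : Fin m),
      Set.ncard {h : ℕ | k - τ ≤ h ∧ h ≤ k ∧ jj h = j} ≤ ρτ)
    -- the delayed iterate x^{k-d_k}
    (xd : ℕ → ∀ j, H j) (hxd : ∀ (k : ℕ) (j : Fin m), xd k j = x ((k : ℤ) - d k j) j)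
    -- stepsizes
    (γ : ℕ → ℝ)
    (hγ : ∀ k, γmin ≤ γ k ∧ γ k ≤ c / (L + 2 * M * Real.sqrt ((ρτ : ℝ) * τ)))
    -- the update: only block j_k moves, and it moves to a minimizer of the prox-subproblem
    (hoff : ∀ (k : ℕ) (j : Fin m), j ≠ jj k → x ((k : ℤ) + 1) j = x k j)
    (hprox : ∀ (k : ℕ) (y : H (jj k)),
      r (jj k) (x ((k : ℤ) + 1) (jj k)) +
        ((⟪pgrad f (xd k) (jj k) (xd k (jj k)), x ((k : ℤ) + 1) (jj k) - x k (jj k)⟫ +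
            (1 / (2 * γ k)) * ‖x ((k : ℤ) + 1) (jj k) - x k (jj k)‖ ^ 2 : ℝ) : EReal) ≤
      r (jj k) y +
        ((⟪pgrad f (xd k) (jj k) (xd k (jj k)), y - x k (jj k)⟫ +
            (1 / (2 * γ k)) * ‖y - x k (jj k)‖ ^ 2 : ℝ) : EReal))
    -- (i) partial-gradient Lipschitz moduli, bounded by L
    (Lip : ℕ → Fin m → ℝ)
    (hLip : ∀ (k : ℕ) (j : Fin m) (y y' : H j),
      ‖pgrad f (x k) j y - pgrad f (x k) j y'‖ ≤ Lip k j * ‖y - y'‖)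
    (hLipL : ∀ k j, Lip k j ≤ L)
    -- (ii) delayed-gradient bound
    (hMd : ∀ k : ℕ,
      ‖pgrad f (x k) (jj k) (x k (jj k)) - pgrad f (xd k) (jj k) (xd k (jj k))‖ ≤
        M * Real.sqrt (sqNorm (x k - xd k)))
    -- κ_k, the Lyapunov value Φ_k, and the constant C
    (κ : ℕ → ℝ)
    (hκ : ∀ k : ℕ, κ k = (M * Real.sqrt ρτ / (2 * Real.sqrt τ)) *
      ∑ i ∈ Finset.range τ,
        ((i : ℝ) + 1) * sqNorm (x ((k : ℤ) - τ + 1 + i) - x ((k : ℤ) - τ + i)))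
    (Φ : ℕ → EReal) (hΦ : ∀ k : ℕ, Φ k = Ψ (x k) + (κ k : EReal))
    (C : ℝ) (hC : C = (1 / 2) * (1 / c - 1) * (L + 2 * M * Real.sqrt ((ρτ : ℝ) * τ))) :
    ∀ k : ℕ, κ (k + 1) ≤ κ k -
      ⟪pgrad f (x k) (jj k) (x k (jj k)) - pgrad f (xd k) (jj k) (xd k (jj k)),
        x ((k : ℤ) + 1) (jj k) - x k (jj k)⟫ +
      M * Real.sqrt ((ρτ : ℝ) * τ) * ‖x ((k : ℤ) + 1) (jj k) - x k (jj k)‖ ^ 2 := by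
    classical
  intro k
  have hτR : (0:ℝ) < τ := by exact_mod_cast hτ
  have hsτ : 0 < Real.sqrt τ := Real.sqrt_pos.mpr hτR
  set a : ℝ := M * Real.sqrt ρτ / (2 * Real.sqrt τ) with ha
  have ha0 : 0 ≤ a := by positivity
  set Δ : ℕ → ∀ j, H j := fun i => x ((k:ℤ) - τ + 1 + i) - x ((k:ℤ) - τ + i) with hΔdef
  set q : ℕ → ℝ := fun i => sqNorm (Δ i) with hqdef
  have hq0 : ∀ i, 0 ≤ q i := fun i => Finset.sum_nonneg fun j _ => sq_nonneg _
  set S : ℝ := ∑ i ∈ Finset.range τ, q i with hSdef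
  have hS0 : 0 ≤ S := Finset.sum_nonneg fun i _ => hq0 i
  set u : H (jj k) := x ((k:ℤ)+1) (jj k) - x (k:ℤ) (jj k) with hudef
  set g : H (jj k) := pgrad f (x (k:ℤ)) (jj k) (x (k:ℤ) (jj k)) -
      pgrad f (xd k) (jj k) (xd k (jj k)) with hgdef
  -- q τ = ‖u‖²
  have hqτ : q τ = ‖u‖^2 := by
    have e1 : (k:ℤ) - (τ:ℕ) + 1 + (τ:ℕ) = (k:ℤ) + 1 := by push_cast; ring
    have e2 : (k:ℤ) - (τ:ℕ) + (τ:ℕ) = (k:ℤ) := by push_cast; ring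
    have hΔτ : Δ τ = x ((k:ℤ)+1) - x (k:ℤ) := by
      simp only [hΔdef]
      rw [e1, e2]
    have h1 : q τ = ∑ j, ‖x ((k:ℤ)+1) j - x (k:ℤ) j‖^2 := by
      rw [hqdef]
      simp only [hΔτ, sqNorm, Pi.sub_apply]
    rw [h1, Finset.sum_eq_single (jj k)]
    · intro j _ hne
      rw [hoff k j hne, sub_self, norm_zero]
      ring
    · intro h
      exact absurd (Finset.mem_univ _) h
  -- κ recursion identity
  have hterm : ∀ i : ℕ, sqNorm (x (((k+1:ℕ):ℤ) - τ + 1 + i) - x (((k+1:ℕ):ℤ) - τ + i))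
      = q (i+1) := by
    intro i
    have e1 : ((k+1:ℕ):ℤ) - (τ:ℕ) + 1 + (i:ℕ) = (k:ℤ) - (τ:ℕ) + 1 + ((i+1:ℕ):ℤ) := by
      push_cast; ring
    have e2 : ((k+1:ℕ):ℤ) - (τ:ℕ) + (i:ℕ) = (k:ℤ) - (τ:ℕ) + ((i+1:ℕ):ℤ) := by
      push_cast; ring
    rw [hqdef]
    simp only [hΔdef]
    rw [e1, e2]
  have hκ1 : κ (k+1) = a * (∑ i ∈ Finset.range τ, ((i:ℝ)+1) * q (i+1)) := by
    rw [hκ (k+1)]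
    congr 1
    exact Finset.sum_congr rfl fun i _ => by rw [hterm i]
  have hκ0 : κ k = a * (∑ i ∈ Finset.range τ, ((i:ℝ)+1) * q i) := by
    rw [hκ k]
  have hshift : ∑ i ∈ Finset.range τ, ((i:ℝ)+1) * q (i+1)
      = (∑ i ∈ Finset.range τ, (i:ℝ) * q i) + (τ:ℝ) * q τ := by
    have h1 := Finset.sum_range_succ' (fun i => (i:ℝ) * q i) τ
    have h2 := Finset.sum_range_succ (fun i => (i:ℝ) * q i) τ
    simp only [Nat.cast_zero, zero_mul, add_zero, Nat.cast_add, Nat.cast_one] at h1 h2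
    linarith [h1, h2]
  have hsplit : ∑ i ∈ Finset.range τ, ((i:ℝ)+1) * q i
      = (∑ i ∈ Finset.range τ, (i:ℝ) * q i) + S := by
    rw [hSdef, ← Finset.sum_add_distrib]
    exact Finset.sum_congr rfl fun i _ => by ring
  have hκrec : κ (k+1) = κ k + a * ((τ:ℝ) * q τ - S) := by
    rw [hκ1, hκ0, hshift, hsplit]; ring
  -- per-block bound on the delayed difference
  have hblock : ∀ j : Fin m, ‖x (k:ℤ) j - xd k j‖^2
      ≤ (ρτ:ℝ) * ∑ i ∈ Finset.range τ, ‖Δ i j‖^2 := by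
    intro j
    have hdjτ : d k j ≤ τ := hd k j
    have hΔF : ∀ i : ℕ, Δ i j
        = (fun n : ℕ => x ((k:ℤ) - τ + n) j) (i+1) - (fun n : ℕ => x ((k:ℤ) - τ + n) j) i := by
      intro i
      have e : (k:ℤ) - (τ:ℕ) + 1 + (i:ℕ) = (k:ℤ) - (τ:ℕ) + ((i+1:ℕ):ℤ) := by push_cast; ring
      simp only [hΔdef, Pi.sub_apply]
      rw [e]
    have htel : ∑ i ∈ Finset.Ico (τ - d k j) τ, Δ i j = x (k:ℤ) j - xd k j := by
      rw [Finset.sum_congr rfl fun i _ => hΔF i,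
        Finset.sum_Ico_eq_sub _ (Nat.sub_le τ (d k j)),
        Finset.sum_range_sub (fun n : ℕ => x ((k:ℤ) - τ + n) j),
        Finset.sum_range_sub (fun n : ℕ => x ((k:ℤ) - τ + n) j)]
      have eτ : (k:ℤ) - (τ:ℕ) + ((τ:ℕ):ℤ) = (k:ℤ) := by push_cast; ring
      have ed : (k:ℤ) - (τ:ℕ) + ((τ - d k j:ℕ):ℤ) = (k:ℤ) - (d k j : ℕ) := by
        rw [Nat.cast_sub hdjτ]; push_cast; ring
      simp only [eτ, ed, Nat.cast_zero, add_zero]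
      rw [hxd k j]
      abel
    set T := (Finset.Ico (τ - d k j) τ).filter (fun i => Δ i j ≠ 0) with hT
    have hsumT : ∑ i ∈ T, Δ i j = x (k:ℤ) j - xd k j := by
      rw [hT, Finset.sum_filter_ne_zero, htel]
    have hposT : ∀ i ∈ T, 0 ≤ (k:ℤ) - τ + i := by
      intro i hi
      rw [hT, Finset.mem_filter] at hi
      by_contra hneg
      push_neg at hneg
      have h1 : (k:ℤ) - τ + 1 + i ≤ 0 := by omega
      have h2 : (k:ℤ) - τ + i ≤ 0 := by omega
      apply hi.2
      simp only [hΔdef, Pi.sub_apply]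
      rw [hx0 _ h1, hx0 _ h2, sub_self]
    have hcardT : T.card ≤ ρτ := by
      have hmem : ∀ i ∈ T, ((k:ℤ) - τ + i).toNat ∈ {h : ℕ | k - τ ≤ h ∧ h ≤ k ∧ jj h = j} := by
        intro i hi
        have hpos := hposT i hi
        rw [hT, Finset.mem_filter, Finset.mem_Ico] at hi
        obtain ⟨⟨hi1, hi2⟩, hne⟩ := hi
        set n : ℕ := ((k:ℤ) - τ + i).toNat with hn
        have hcast : (n:ℤ) = (k:ℤ) - τ + i := by rw [hn]; omega
        refine ⟨by omega, by omega, ?_⟩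
        by_contra hjj
        apply hne
        have hoff' := hoff n j (fun h => hjj h.symm)
        simp only [hΔdef, Pi.sub_apply]
        have e1 : (k:ℤ) - (τ:ℕ) + 1 + (i:ℕ) = (n:ℤ) + 1 := by omega
        have e2 : (k:ℤ) - (τ:ℕ) + (i:ℕ) = (n:ℤ) := by omega
        rw [e1, e2, hoff', sub_self]
      have hinj : Set.InjOn (fun i : ℕ => ((k:ℤ) - τ + i).toNat) ↑T := by
        intro i hi i' hi' hee
        have h1 := hposT i hi
        have h2 := hposT i' hi'
        simp only at hee
        omega
      calc T.card = (T.image (fun i : ℕ => ((k:ℤ) - τ + i).toNat)).card :=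
            (Finset.card_image_of_injOn hinj).symm
        _ = Set.ncard (↑(T.image (fun i : ℕ => ((k:ℤ) - τ + i).toNat)) : Set ℕ) :=
            (Set.ncard_coe_finset _).symm
        _ ≤ Set.ncard {h : ℕ | k - τ ≤ h ∧ h ≤ k ∧ jj h = j} := by
            apply Set.ncard_le_ncard
            · intro n hn
              simp only [Finset.coe_image, Set.mem_image, Finset.mem_coe] at hn
              obtain ⟨i, hi, rfl⟩ := hn
              exact hmem i hi
            · exact (Set.finite_Iic k).subset fun n hn => hn.2.1
        _ ≤ ρτ := hcount k j
    calc ‖x (k:ℤ) j - xd k j‖^2 = ‖∑ i ∈ T, Δ i j‖^2 := by rw [hsumT]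
      _ ≤ (∑ i ∈ T, ‖Δ i j‖)^2 := by
          apply pow_le_pow_left₀ (norm_nonneg _) (norm_sum_le _ _)
      _ ≤ (T.card : ℝ) * ∑ i ∈ T, ‖Δ i j‖^2 := sq_sum_le_card_mul_sum_sq
      _ ≤ (ρτ:ℝ) * ∑ i ∈ Finset.range τ, ‖Δ i j‖^2 := by
          apply mul_le_mul
          · exact_mod_cast hcardT
          · apply Finset.sum_le_sum_of_subset_of_nonneg
            · intro i hi
              rw [hT, Finset.mem_filter, Finset.mem_Ico] at hi
              exact Finset.mem_range.mpr hi.1.2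
            · intros; positivity
          · positivity
          · positivity
  -- the delayed sqNorm bound
  have hSbound : sqNorm (x (k:ℤ) - xd k) ≤ (ρτ:ℝ) * S := by
    have h1 : sqNorm (x (k:ℤ) - xd k) = ∑ j, ‖x (k:ℤ) j - xd k j‖^2 := by
      simp [sqNorm]
    rw [h1]
    calc ∑ j, ‖x (k:ℤ) j - xd k j‖^2 ≤ ∑ j, (ρτ:ℝ) * ∑ i ∈ Finset.range τ, ‖Δ i j‖^2 :=
          Finset.sum_le_sum fun j _ => hblock j
      _ = (ρτ:ℝ) * ∑ i ∈ Finset.range τ, ∑ j, ‖Δ i j‖^2 := by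
          rw [← Finset.mul_sum, Finset.sum_comm]
      _ = (ρτ:ℝ) * S := by
          rw [hSdef]
          simp only [hqdef, sqNorm]
  -- inner product bound
  have hsqS : Real.sqrt (sqNorm (x (k:ℤ) - xd k)) ≤ Real.sqrt ρτ * Real.sqrt S := by
    rw [← Real.sqrt_mul (by positivity) S]
    exact Real.sqrt_le_sqrt hSbound
  have hip : ⟪g, u⟫ ≤ M * Real.sqrt ρτ * (Real.sqrt S * ‖u‖) := by
    have h0 := hMd k
    rw [← hgdef] at h0
    calc ⟪g, u⟫ ≤ ‖g‖ * ‖u‖ := real_inner_le_norm g u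
      _ ≤ (M * Real.sqrt (sqNorm (x (k:ℤ) - xd k))) * ‖u‖ :=
          mul_le_mul_of_nonneg_right h0 (norm_nonneg _)
      _ ≤ (M * (Real.sqrt ρτ * Real.sqrt S)) * ‖u‖ := by
          apply mul_le_mul_of_nonneg_right _ (norm_nonneg _)
          exact mul_le_mul_of_nonneg_left hsqS hM.le
      _ = M * Real.sqrt ρτ * (Real.sqrt S * ‖u‖) := by ring
  have hip2 : ⟪g, u⟫ ≤ a * ((τ:ℝ) * ‖u‖^2 + S) := by
    have hamgm : 2 * (Real.sqrt τ * ‖u‖) * Real.sqrt S ≤ (τ:ℝ) * ‖u‖^2 + S := by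
      nlinarith [two_mul_le_add_sq (Real.sqrt τ * ‖u‖) (Real.sqrt S),
        Real.sq_sqrt hS0, Real.sq_sqrt hτR.le]
    have heq : M * Real.sqrt ρτ * (Real.sqrt S * ‖u‖)
        = a * (2 * (Real.sqrt τ * ‖u‖) * Real.sqrt S) := by
      rw [ha]
      field_simp
    calc ⟪g, u⟫ ≤ M * Real.sqrt ρτ * (Real.sqrt S * ‖u‖) := hip
      _ = a * (2 * (Real.sqrt τ * ‖u‖) * Real.sqrt S) := heq
      _ ≤ a * ((τ:ℝ) * ‖u‖^2 + S) := mul_le_mul_of_nonneg_left hamgm ha0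
  have hττ : Real.sqrt τ * Real.sqrt τ = (τ:ℝ) := Real.mul_self_sqrt hτR.le
  have hMτeq : M * Real.sqrt ((ρτ:ℝ) * τ) = 2 * a * τ := by
    rw [Real.sqrt_mul (by positivity), ha]
    field_simp
    linear_combination hττ
  rw [hκrec, hqτ, hMτeq]
  linarith [hip2]
end

section
/- Fix k ≥ 0, ρ ∈ ℕ and τ ≥ 1, and suppose that for every block j the number of indices h ∈ {k−τ+1,…,k} with x_j^h ≠ x_j^{h−1} is at most ρ. Then for every delay vector d ∈ {0,…,τ}^m, writing x^{k−d} for the vector whose j-th block is x_j^{k−d_j}, one has ‖x^k − x^{k−d}‖² ≤ ρ Σ_{h=k−τ+1}^{k} ‖x^h − x^{h−1}‖². -/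
open Finset

theorem stmt_6 {m : ℕ} (H : Fin m → Type*) [∀ j, NormedAddCommGroup (H j)]
    [∀ j, InnerProductSpace ℝ (H j)]
    -- the sequence, extended by x^h = x^0 for h ≤ 0
    (x : ℤ → ∀ j, H j) (hx0 : ∀ h : ℤ, h ≤ 0 → x h = x 0)
    (k : ℕ) (ρ τ : ℕ) (hτ : 1 ≤ τ)
    -- each block changes at most ρ times among h ∈ {k-τ+1, …, k}
    (hcount : ∀ j : Fin m,
      Set.ncard {h : ℤ | h ∈ Set.Icc ((k : ℤ) - τ + 1) (k : ℤ) ∧ x h j ≠ x (h - 1) j} ≤ ρ)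
    (d : Fin m → ℕ) (hd : ∀ j, d j ≤ τ) :
    ∑ j, ‖x k j - x ((k : ℤ) - d j) j‖ ^ 2 ≤
      (ρ : ℝ) * ∑ h ∈ Finset.Icc ((k : ℤ) - τ + 1) (k : ℤ), ∑ j, ‖x h j - x (h - 1) j‖ ^ 2 := by
  -- blockwise estimate
  have key : ∀ j : Fin m, ‖x k j - x ((k : ℤ) - d j) j‖ ^ 2 ≤
      (ρ : ℝ) * ∑ h ∈ Finset.Icc ((k : ℤ) - τ + 1) (k : ℤ), ‖x h j - x (h - 1) j‖ ^ 2 := by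
    intro j
    classical
    set v : ℕ → H j := fun i => x ((k : ℤ) - i) j - x ((k : ℤ) - i - 1) j with hv
    -- telescoping
    have htel : x (k : ℤ) j - x ((k : ℤ) - d j) j = ∑ i ∈ Finset.range (d j), v i := by
      have h := Finset.sum_range_sub' (fun i : ℕ => x ((k : ℤ) - i) j) (d j)
      simp only [Nat.cast_zero, sub_zero] at h
      rw [← h]
      apply Finset.sum_congr rfl
      intro i _
      simp only [hv]
      congr 2
      push_cast; ring
    set T : Finset ℕ := (Finset.range (d j)).filter (fun i => v i ≠ 0) with hT
    have hsumT : ∑ i ∈ Finset.range (d j), v i = ∑ i ∈ T, v i := by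
      rw [hT]
      exact (Finset.sum_filter_ne_zero _).symm
    -- card bound
    have hsetfin : {h : ℤ | h ∈ Set.Icc ((k : ℤ) - τ + 1) (k : ℤ) ∧ x h j ≠ x (h - 1) j}
        = ↑((Finset.Icc ((k : ℤ) - τ + 1) (k : ℤ)).filter (fun h => x h j ≠ x (h - 1) j)) := by
      ext h; simp
    have hcard : (T.card : ℝ) ≤ (ρ : ℝ) := by
      have h1 : T.card ≤
          ((Finset.Icc ((k : ℤ) - τ + 1) (k : ℤ)).filter (fun h => x h j ≠ x (h - 1) j)).card := by
        refine Finset.card_le_card_of_injOn (fun i => (k : ℤ) - i) ?_ ?_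
        · intro i hi
          simp only [hT, Finset.mem_coe, Finset.mem_filter, Finset.mem_range] at hi
          simp only [Finset.mem_coe, Finset.mem_filter, Finset.mem_Icc]
          refine ⟨⟨?_, ?_⟩, ?_⟩
          · have : (i : ℤ) < τ := by
              exact_mod_cast lt_of_lt_of_le hi.1 (hd j)
            omega
          · omega
          · intro hcontra
            apply hi.2
            simp [hv, sub_eq_zero, hcontra]
        · intro a _ b _ hab
          have : (k : ℤ) - a = (k : ℤ) - b := hab
          omega
      have h2 := hcount j
      rw [hsetfin, Set.ncard_coe_finset] at h2
      exact_mod_cast le_trans h1 h2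
    -- Cauchy–Schwarz step
    calc ‖x (k : ℤ) j - x ((k : ℤ) - d j) j‖ ^ 2
        = ‖∑ i ∈ T, v i‖ ^ 2 := by rw [htel, hsumT]
      _ ≤ (∑ i ∈ T, ‖v i‖) ^ 2 := by
          apply pow_le_pow_left₀ (norm_nonneg _)
          exact norm_sum_le _ _
      _ ≤ (T.card : ℝ) * ∑ i ∈ T, ‖v i‖ ^ 2 := by
          exact_mod_cast sq_sum_le_card_mul_sum_sq (s := T) (f := fun i => ‖v i‖)
      _ ≤ (ρ : ℝ) * ∑ i ∈ T, ‖v i‖ ^ 2 := by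
          apply mul_le_mul_of_nonneg_right hcard
          positivity
      _ ≤ (ρ : ℝ) * ∑ i ∈ Finset.range τ, ‖v i‖ ^ 2 := by
          apply mul_le_mul_of_nonneg_left _ (by positivity)
          apply Finset.sum_le_sum_of_subset_of_nonneg
          · intro i hi
            simp only [hT, Finset.mem_filter, Finset.mem_range] at hi ⊢
            exact lt_of_lt_of_le hi.1 (hd j)
          · intros; positivity
      _ = (ρ : ℝ) * ∑ h ∈ Finset.Icc ((k : ℤ) - τ + 1) (k : ℤ), ‖x h j - x (h - 1) j‖ ^ 2 := by
          congr 1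
          refine Finset.sum_nbij' (fun i => (k : ℤ) - i) (fun h => ((k : ℤ) - h).toNat) ?_ ?_ ?_ ?_ ?_
          · intro i hi
            simp only [Finset.mem_range] at hi
            simp only [Finset.mem_Icc]
            omega
          · intro h hh
            simp only [Finset.mem_Icc] at hh
            simp only [Finset.mem_range]
            omega
          · intro i hi; simp only [Finset.mem_range] at hi
            show ((k : ℤ) - ((k : ℤ) - (i : ℤ))).toNat = i
            omega
          · intro h hh; simp only [Finset.mem_Icc] at hh
            show (k : ℤ) - (((k : ℤ) - h).toNat : ℤ) = h
            omega
          · intro i hi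
            simp [hv]
  calc ∑ j, ‖x (k : ℤ) j - x ((k : ℤ) - d j) j‖ ^ 2
      ≤ ∑ j, (ρ : ℝ) * ∑ h ∈ Finset.Icc ((k : ℤ) - τ + 1) (k : ℤ), ‖x h j - x (h - 1) j‖ ^ 2 :=
        Finset.sum_le_sum (fun j _ => key j)
    _ = (ρ : ℝ) * ∑ h ∈ Finset.Icc ((k : ℤ) - τ + 1) (k : ℤ), ∑ j, ‖x h j - x (h - 1) j‖ ^ 2 := by
        rw [← Finset.mul_sum, Finset.sum_comm]
end

section
/- Let 0 < γ_min ≤ γ_q ≤ γ_max < ∞ for all q, let {g_q} be a bounded sequence in E, and let u_q → x̄ and y_q → x̄ in E. If for every q the point y_q minimizes y ↦ r(y) + ⟨g_q, y − u_q⟩ + (1/(2γ_q))‖y − u_q‖² over E, then r(y_q) → r(x̄) in the extended reals. -/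
open Filter RealInnerProductSpace

private lemma ereal_add_sub (A : EReal) (c b : ℝ) : A + (c : EReal) - (b : EReal) = A + ((c - b : ℝ) : EReal) := by
  induction A with
  | bot => simp
  | coe a =>
    rw [← EReal.coe_add, ← EReal.coe_sub, ← EReal.coe_add]
    norm_cast
    ring
  | top => rw [EReal.top_add_coe, EReal.top_sub_coe, EReal.top_add_coe]

theorem stmt_7 {E : Type*} [NormedAddCommGroup E] [InnerProductSpace ℝ E]
    [FiniteDimensional ℝ E]
    -- r is proper and lower semicontinuous with values in (−∞, +∞]
    (r : E → EReal) (hproper : ∃ z, r z ≠ ⊤) (hbot : ∀ z, r z ≠ ⊥)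
    (hlsc : LowerSemicontinuous r)
    (γmin γmax : ℝ) (hγmin : 0 < γmin) (γ : ℕ → ℝ)
    (hγ : ∀ q, γmin ≤ γ q ∧ γ q ≤ γmax)
    (g : ℕ → E) (hg : Bornology.IsBounded (Set.range g))
    (u y : ℕ → E) (xbar : E)
    (hu : Tendsto u atTop (nhds xbar)) (hy : Tendsto y atTop (nhds xbar))
    -- each y_q minimizes the prox-subproblem
    (hmin : ∀ (q : ℕ) (z : E),
      r (y q) + ((⟪g q, y q - u q⟫ + (1 / (2 * γ q)) * ‖y q - u q‖ ^ 2 : ℝ) : EReal) ≤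
      r z + ((⟪g q, z - u q⟫ + (1 / (2 * γ q)) * ‖z - u q‖ ^ 2 : ℝ) : EReal)) :
    Tendsto (fun q => r (y q)) atTop (nhds (r xbar)) := by
  obtain ⟨M, hM⟩ := isBounded_iff_forall_norm_le.1 hg
  have hMg : ∀ q, ‖g q‖ ≤ M := fun q => hM _ (Set.mem_range_self q)
  -- key convergence lemma for the quadratic terms
  have key : ∀ v : ℕ → E, Tendsto v atTop (nhds 0) →
      Tendsto (fun q => (⟪g q, v q⟫ + (1 / (2 * γ q)) * ‖v q‖ ^ 2 : ℝ)) atTop (nhds 0) := by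
    intro v hv
    have hvn : Tendsto (fun q => ‖v q‖) atTop (nhds 0) := by
      simpa using hv.norm
    have hbound : Tendsto (fun q => M * ‖v q‖ + (1 / (2 * γmin)) * ‖v q‖ ^ 2)
        atTop (nhds 0) := by
      have h1 : Tendsto (fun q => M * ‖v q‖) atTop (nhds (M * 0)) := hvn.const_mul M
      have h2 : Tendsto (fun q => (1 / (2 * γmin)) * ‖v q‖ ^ 2) atTop
          (nhds ((1 / (2 * γmin)) * 0 ^ 2)) := (hvn.pow 2).const_mul _
      simpa using h1.add h2
    refine squeeze_zero_norm (fun q => ?_) hbound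
    have hγq : 0 < γ q := lt_of_lt_of_le hγmin (hγ q).1
    have h1 : |⟪g q, v q⟫| ≤ M * ‖v q‖ := by
      calc |⟪g q, v q⟫| ≤ ‖g q‖ * ‖v q‖ := abs_real_inner_le_norm _ _
        _ ≤ M * ‖v q‖ := mul_le_mul_of_nonneg_right (hMg q) (norm_nonneg _)
    have h2 : |(1 / (2 * γ q)) * ‖v q‖ ^ 2| ≤ (1 / (2 * γmin)) * ‖v q‖ ^ 2 := by
      rw [abs_of_nonneg (by positivity)]
      have : 1 / (2 * γ q) ≤ 1 / (2 * γmin) :=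
        one_div_le_one_div_of_le (by linarith) (by linarith [(hγ q).1])
      exact mul_le_mul_of_nonneg_right this (by positivity)
    calc ‖⟪g q, v q⟫ + (1 / (2 * γ q)) * ‖v q‖ ^ 2‖
        ≤ |⟪g q, v q⟫| + |(1 / (2 * γ q)) * ‖v q‖ ^ 2| := abs_add_le _ _
      _ ≤ M * ‖v q‖ + (1 / (2 * γmin)) * ‖v q‖ ^ 2 := add_le_add h1 h2
  -- the error sequence
  set e : ℕ → ℝ := fun q =>
    (⟪g q, xbar - u q⟫ + (1 / (2 * γ q)) * ‖xbar - u q‖ ^ 2)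
    - (⟪g q, y q - u q⟫ + (1 / (2 * γ q)) * ‖y q - u q‖ ^ 2) with he_def
  have he : Tendsto e atTop (nhds 0) := by
    have h1 := key (fun q => xbar - u q) (by simpa using hu.const_sub xbar)
    have h2 := key (fun q => y q - u q) (by simpa using (hy.sub hu))
    simpa only [sub_zero] using h1.sub h2
  -- upper estimate from minimality
  have hub : ∀ q, r (y q) ≤ r xbar + (e q : EReal) := by
    intro q
    have h := hmin q xbar
    have h' : r (y q) ≤ r xbar
        + ((⟪g q, xbar - u q⟫ + (1 / (2 * γ q)) * ‖xbar - u q‖ ^ 2 : ℝ) : EReal)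
        - ((⟪g q, y q - u q⟫ + (1 / (2 * γ q)) * ‖y q - u q‖ ^ 2 : ℝ) : EReal) := by
      exact (EReal.le_sub_iff_add_le (Or.inl (EReal.coe_ne_bot _))
        (Or.inl (EReal.coe_ne_top _))).2 h
    rw [ereal_add_sub] at h'
    exact h'
  -- the upper bound tends to r xbar
  have htend : Tendsto (fun q => r xbar + (e q : EReal)) atTop (nhds (r xbar)) := by
    cases hxb : r xbar with
    | bot => exact absurd hxb (hbot xbar)
    | coe a =>
      simp only [← EReal.coe_add]
      rw [show ((a : ℝ) : EReal) = ((a : ℝ) : EReal) from rfl]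
      exact EReal.tendsto_coe.2 (by simpa using (tendsto_const_nhds.add he))
    | top =>
      simp only [EReal.top_add_coe]
      exact tendsto_const_nhds
  -- limsup ≤ r xbar
  have hsup : limsup (fun q => r (y q)) atTop ≤ r xbar := by
    calc limsup (fun q => r (y q)) atTop
        ≤ limsup (fun q => r xbar + (e q : EReal)) atTop :=
          limsup_le_limsup (Eventually.of_forall hub)
      _ = r xbar := htend.limsup_eq
  -- r xbar ≤ liminf
  have hinf : r xbar ≤ liminf (fun q => r (y q)) atTop := by
    have h1 : r xbar ≤ liminf r (nhds xbar) := LowerSemicontinuousAt.le_liminf (hlsc xbar)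
    have h2 : liminf r (nhds xbar) ≤ liminf r (map y atTop) :=
      liminf_le_liminf_of_le hy
    have h3 : liminf r (map y atTop) = liminf (fun q => r (y q)) atTop := by
      rw [Filter.liminf, Filter.liminf, Filter.map_map]
      rfl
    rw [h3] at h2
    exact h1.trans h2
  exact tendsto_of_le_liminf_of_limsup_le hinf hsup
end

section
/- Let T ≥ 1 be an integer, let b_1, …, b_T be nonnegative reals with Σ_{i=1}^T b_i < 1, let {ε_k}_{k∈ℕ} be a summable sequence of nonnegative reals, and let {a_k}_{k∈ℕ} be nonnegative reals (extended by a_h := a_0 for h ≤ 0) such that a_{k+1} ≤ Σ_{i=1}^T b_i a_{k+1−i} + ε_k for every k ∈ ℕ. Then Σ_{k=0}^∞ a_k < ∞. -/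
theorem stmt_9 (T : ℕ) (hT : 1 ≤ T)
    (b : ℕ → ℝ) (hb : ∀ i ∈ Finset.Icc 1 T, 0 ≤ b i)
    (hbsum : ∑ i ∈ Finset.Icc 1 T, b i < 1)
    (ε : ℕ → ℝ) (hε0 : ∀ k, 0 ≤ ε k) (hεsum : Summable ε)
    (a : ℕ → ℝ) (ha0 : ∀ k, 0 ≤ a k)
    -- recursion; note `k + 1 - i` is truncated subtraction, matching the
    -- convention a_h := a_0 for h ≤ 0
    (hrec : ∀ k : ℕ, a (k + 1) ≤ ∑ i ∈ Finset.Icc 1 T, b i * a (k + 1 - i) + ε k) :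
    Summable a := by
  set B := ∑ i ∈ Finset.Icc 1 T, b i with hBdef
  have hB0 : 0 ≤ B := Finset.sum_nonneg hb
  set E := ∑' k, ε k with hEdef
  have hE0 : 0 ≤ E := tsum_nonneg hε0
  have hEle : ∀ N, ∑ k ∈ Finset.range N, ε k ≤ E := fun N =>
    Summable.sum_le_tsum _ (fun k _ => hε0 k) hεsum
  have h1B : 0 < 1 - B := by linarith
  -- key lemma: shifted partial sums are controlled
  have key : ∀ i ∈ Finset.Icc 1 T, ∀ N,
      ∑ k ∈ Finset.range N, a (k + 1 - i) ≤ T * a 0 + ∑ k ∈ Finset.range N, a k := by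
    intro i hi N
    simp only [Finset.mem_Icc] at hi
    have hS0 : 0 ≤ ∑ k ∈ Finset.range N, a k := Finset.sum_nonneg fun k _ => ha0 k
    rcases le_or_gt N i with h | h
    · have hc : ∀ k ∈ Finset.range N, a (k + 1 - i) = a 0 := by
        intro k hk
        simp only [Finset.mem_range] at hk
        congr 1; omega
      rw [Finset.sum_congr rfl hc, Finset.sum_const, Finset.card_range, nsmul_eq_mul]
      have h1 : (N : ℝ) ≤ (T : ℝ) := by exact_mod_cast le_trans h hi.2
      nlinarith [ha0 0]
    · have hsplit : (∑ k ∈ Finset.Ico 0 i, a (k + 1 - i)) + ∑ k ∈ Finset.Ico i N, a (k + 1 - i)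
          = ∑ k ∈ Finset.Ico 0 N, a (k + 1 - i) :=
        Finset.sum_Ico_consecutive _ (Nat.zero_le i) h.le
      rw [← Finset.range_eq_Ico, ← Finset.range_eq_Ico] at hsplit
      rw [← hsplit]
      have h1 : ∑ k ∈ Finset.range i, a (k + 1 - i) = (i : ℝ) * a 0 := by
        have hc : ∀ k ∈ Finset.range i, a (k + 1 - i) = a 0 := by
          intro k hk
          simp only [Finset.mem_range] at hk
          congr 1; omega
        rw [Finset.sum_congr rfl hc, Finset.sum_const, Finset.card_range, nsmul_eq_mul]
      have h2 : ∑ k ∈ Finset.Ico i N, a (k + 1 - i) = ∑ j ∈ Finset.range (N - i), a (j + 1) := by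
        rw [Finset.sum_Ico_eq_sum_range]
        apply Finset.sum_congr rfl
        intro j _
        congr 1; omega
      have h3 : ∑ j ∈ Finset.range (N - i), a (j + 1) ≤ ∑ j ∈ Finset.range (N - 1), a (j + 1) := by
        apply Finset.sum_le_sum_of_subset_of_nonneg
        · exact Finset.range_subset_range.mpr (by omega)
        · intro j _ _; exact ha0 _
      have h4 : ∑ k ∈ Finset.range N, a k = ∑ j ∈ Finset.range (N - 1), a (j + 1) + a 0 := by
        have := Finset.sum_range_succ' a (N - 1)
        rwa [Nat.sub_add_cancel (by omega : 1 ≤ N)] at this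
      have hiT : (i : ℝ) ≤ (T : ℝ) := by exact_mod_cast hi.2
      rw [h1, h2] at *
      nlinarith [ha0 0]
  -- bound on partial sums
  set C := (a 0 + B * (T * a 0) + E) / (1 - B) with hCdef
  have hbound : ∀ N, ∑ k ∈ Finset.range N, a k ≤ C := by
    intro N
    cases N with
    | zero =>
      simp only [Finset.range_zero, Finset.sum_empty]
      apply div_nonneg _ h1B.le
      have hT0 : (0:ℝ) ≤ (T : ℝ) := Nat.cast_nonneg T
      nlinarith [ha0 0, mul_nonneg hB0 (mul_nonneg hT0 (ha0 0))]
    | succ n =>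
      set S := ∑ k ∈ Finset.range (n + 1), a k with hSdef
      have hS0 : 0 ≤ S := Finset.sum_nonneg fun k _ => ha0 k
      have hSn : ∑ k ∈ Finset.range n, a k ≤ S := by
        rw [hSdef, Finset.sum_range_succ]
        nlinarith [ha0 n]
      have hsum1 : ∑ k ∈ Finset.range n, a (k + 1) ≤
          ∑ k ∈ Finset.range n, (∑ i ∈ Finset.Icc 1 T, b i * a (k + 1 - i) + ε k) :=
        Finset.sum_le_sum fun k _ => hrec k
      rw [Finset.sum_add_distrib, Finset.sum_comm] at hsum1
      have hsum2 : ∑ i ∈ Finset.Icc 1 T, ∑ k ∈ Finset.range n, b i * a (k + 1 - i)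
          ≤ B * (T * a 0 + S) := by
        rw [hBdef, Finset.sum_mul]
        apply Finset.sum_le_sum
        intro i hi
        rw [← Finset.mul_sum]
        have := key i hi n
        have hbi := hb i hi
        have : ∑ k ∈ Finset.range n, a (k + 1 - i) ≤ T * a 0 + S := by linarith
        nlinarith
      have hEn := hEle n
      have hstep : S ≤ a 0 + B * (T * a 0 + S) + E := by
        have : S = ∑ k ∈ Finset.range n, a (k + 1) + a 0 := by
          rw [hSdef, Finset.sum_range_succ']
        linarith
      rw [hCdef, le_div_iff₀ h1B]
      nlinarith
  exact summable_of_sum_range_le ha0 hbound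
end

section
/- If {a_k}_{k∈ℕ} is a summable sequence of nonnegative real numbers, then (k+1)·min_{0≤t≤k} a_t → 0 as k → ∞; that is, min_{0≤t≤k} a_t = o(1/(k+1)). -/
theorem stmt_10 (a : ℕ → ℝ) (ha : ∀ k, 0 ≤ a k) (hsum : Summable a) :
    Filter.Tendsto
      (fun k : ℕ => ((k : ℝ) + 1) * ((Finset.range (k + 1)).inf' Finset.nonempty_range_add_one a))
      Filter.atTop (nhds 0) := by
  rw [Metric.tendsto_atTop]
  intro ε hε
  have hS : CauchySeq (fun n => ∑ i ∈ Finset.range n, a i) :=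
    hsum.hasSum.tendsto_sum_nat.cauchySeq
  obtain ⟨N, hN⟩ := Metric.cauchySeq_iff'.mp hS (ε / 4) (by positivity)
  refine ⟨2 * N, fun k hk => ?_⟩
  set m := (Finset.range (k + 1)).inf' Finset.nonempty_range_add_one a with hm
  have hm0 : 0 ≤ m := Finset.le_inf' _ _ fun i _ => ha i
  have hNk : N ≤ k + 1 := by omega
  -- tail sum bound
  have htail : ∑ i ∈ Finset.Ico N (k + 1), a i < ε / 4 := by
    have := hN (k + 1) (by omega)
    rw [Real.dist_eq] at this
    rw [Finset.sum_Ico_eq_sub _ hNk]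
    calc ∑ i ∈ Finset.range (k+1), a i - ∑ i ∈ Finset.range N, a i
        ≤ |∑ i ∈ Finset.range (k+1), a i - ∑ i ∈ Finset.range N, a i| := le_abs_self _
      _ < ε / 4 := this
  -- min times count bound
  have hcard : ((k + 1 - N : ℕ) : ℝ) * m ≤ ∑ i ∈ Finset.Ico N (k + 1), a i := by
    have h := Finset.card_nsmul_le_sum (Finset.Ico N (k + 1)) a m
      (fun i hi => Finset.inf'_le a (Finset.mem_range.mpr (Finset.mem_Ico.mp hi).2))
    rwa [Nat.card_Ico, nsmul_eq_mul] at h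
  have hlin : ((k : ℝ) + 1) ≤ 2 * ((k + 1 - N : ℕ) : ℝ) := by
    have : (((k + 1 - N : ℕ)) : ℝ) = (k : ℝ) + 1 - N := by
      push_cast [Nat.cast_sub hNk]; ring
    rw [this]
    have : (N : ℝ) ≤ k / 2 := by
      have : (2 * N : ℝ) ≤ k := by exact_mod_cast hk
      linarith
    linarith
  have hfk : ((k : ℝ) + 1) * m < ε := by
    calc ((k : ℝ) + 1) * m ≤ 2 * ((k + 1 - N : ℕ) : ℝ) * m :=
          mul_le_mul_of_nonneg_right hlin hm0
      _ = 2 * (((k + 1 - N : ℕ) : ℝ) * m) := by ring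
      _ ≤ 2 * ∑ i ∈ Finset.Ico N (k + 1), a i := by linarith
      _ < 2 * (ε / 4) := by linarith
      _ < ε := by linarith
  rw [Real.dist_eq, sub_zero, abs_of_nonneg (by positivity)]
  exact hfk
end

section
/- Let {x^k} be a sequence in E, let {Φ_k} be a nonincreasing sequence of reals with limit Φ*, let C, c₀ > 0, T ≥ 1, k₀ ∈ ℕ, η > 0 and φ ∈ F_η. Assume: (a) Φ_k − Φ_{k+1} ≥ C‖x^{k+1} − x^k‖² for all k ∈ ℕ; (b) Φ* < Φ_k < Φ* + η for all k ≥ k₀; (c) φ′(Φ_k − Φ*) · c₀ Σ_{h=k−T}^{k−1} ‖x^{h+1} − x^h‖ ≥ 1 for all k ≥ k₀ (with the convention x^h := x^0 for h ≤ 0). Then the sequence has finite length, Σ_{k=0}^∞ ‖x^{k+1} − x^k‖ < ∞, and consequently {x^k} converges to a point of E. -/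
open Filter

/-- Cast lemma: a sum over a natural `Ico` equals the sum over the integer `Ico`. -/
lemma aux_sum_cast (f : ℤ → ℝ) (K N : ℕ) :
    ∑ k ∈ Finset.Ico K N, f (k : ℤ) = ∑ h ∈ Finset.Ico (K : ℤ) (N : ℤ), f h := by
  refine Finset.sum_nbij' (fun k => (k : ℤ)) (fun h => h.toNat) ?_ ?_ ?_ ?_ ?_ <;>
    intro a ha <;> simp [Finset.mem_Ico] at * <;> omega

/-- Telescoping sum over `Ico`. -/
lemma aux_telescope (g : ℕ → ℝ) (K N : ℕ) (h : K ≤ N) :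
    ∑ k ∈ Finset.Ico K N, (g k - g (k + 1)) = g K - g N := by
  induction N, h using Nat.le_induction with
  | base => simp
  | succ n hn ih => rw [Finset.sum_Ico_succ_top (by omega), ih]; ring

/-- Each index `h` appears in at most `T` of the sliding windows. -/
lemma aux_double (d : ℤ → ℝ) (hd : ∀ h, 0 ≤ d h) (T K N : ℕ) :
    ∑ k ∈ Finset.Ico K N, (∑ h ∈ Finset.Icc ((k : ℤ) - T) ((k : ℤ) - 1), d h)
      ≤ (T : ℝ) * ∑ h ∈ Finset.Ico ((K : ℤ) - T) (N : ℤ), d h := by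
  rcases le_or_gt N K with hNK | hKN
  · rw [Finset.Ico_eq_empty (by omega)]
    simp only [Finset.sum_empty]
    exact mul_nonneg (Nat.cast_nonneg T) (Finset.sum_nonneg fun h _ => hd h)
  calc ∑ k ∈ Finset.Ico K N, (∑ h ∈ Finset.Icc ((k : ℤ) - T) ((k : ℤ) - 1), d h)
      = ∑ k ∈ Finset.Ico K N, ∑ h ∈ Finset.Ico ((K : ℤ) - T) (N : ℤ),
          (if h ∈ Finset.Icc ((k : ℤ) - T) ((k : ℤ) - 1) then d h else 0) := by
        refine Finset.sum_congr rfl fun k hk => ?_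
        rw [Finset.sum_ite_mem, Finset.inter_eq_right.mpr ?_]
        intro h hh
        simp only [Finset.mem_Icc, Finset.mem_Ico] at *
        omega
    _ = ∑ h ∈ Finset.Ico ((K : ℤ) - T) (N : ℤ), ∑ k ∈ Finset.Ico K N,
          (if h ∈ Finset.Icc ((k : ℤ) - T) ((k : ℤ) - 1) then d h else 0) := Finset.sum_comm
    _ ≤ ∑ h ∈ Finset.Ico ((K : ℤ) - T) (N : ℤ), (T : ℝ) * d h := by
        refine Finset.sum_le_sum fun h _ => ?_
        rw [← Finset.sum_filter]
        have hsub : (Finset.Ico K N).filter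
            (fun k : ℕ => h ∈ Finset.Icc ((k : ℤ) - T) ((k : ℤ) - 1)) ⊆
            Finset.Ico (h + 1).toNat ((h + 1).toNat + T) := by
          intro k hk
          simp only [Finset.mem_filter, Finset.mem_Ico, Finset.mem_Icc] at *
          omega
        calc ∑ _k ∈ (Finset.Ico K N).filter
              (fun k : ℕ => h ∈ Finset.Icc ((k : ℤ) - T) ((k : ℤ) - 1)), d h
            = ((Finset.Ico K N).filter
              (fun k : ℕ => h ∈ Finset.Icc ((k : ℤ) - T) ((k : ℤ) - 1))).card • d h :=
              Finset.sum_const _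
          _ ≤ T • d h := by
              refine nsmul_le_nsmul_left (hd h) ?_
              calc _ ≤ (Finset.Ico (h + 1).toNat ((h + 1).toNat + T)).card :=
                    Finset.card_le_card hsub
                _ = T := by rw [Nat.card_Ico]; omega
          _ = (T : ℝ) * d h := by simp [nsmul_eq_mul]
    _ = (T : ℝ) * ∑ h ∈ Finset.Ico ((K : ℤ) - T) (N : ℤ), d h := by rw [Finset.mul_sum]

/-- The scalar KL step inequality. -/
lemma aux_step (C c₀ Tr dk Sk δ Δd p : ℝ) (hC : 0 < C) (hc₀ : 0 < c₀) (hTr : 1 ≤ Tr)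
    (hd : 0 ≤ dk) (hS : 0 ≤ Sk) (hp : 0 < p)
    (h1 : p * Δd ≤ δ) (h2 : C * dk ^ 2 ≤ Δd) (h3 : 1 ≤ p * (c₀ * Sk)) :
    0 ≤ δ ∧ 2 * Tr * C * dk ≤ C * Sk + Tr ^ 2 * c₀ * δ := by
  have hΔd : 0 ≤ Δd := le_trans (by positivity) h2
  have hδ : 0 ≤ δ := le_trans (by positivity) h1
  have e1 : 1 * Δd ≤ (p * (c₀ * Sk)) * Δd := mul_le_mul_of_nonneg_right h3 hΔd
  have e2 : (c₀ * Sk) * (p * Δd) ≤ (c₀ * Sk) * δ :=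
    mul_le_mul_of_nonneg_left h1 (by positivity)
  have hkey : C * dk ^ 2 ≤ c₀ * Sk * δ := by nlinarith [e1, e2, h2]
  refine ⟨hδ, ?_⟩
  have huv0 := mul_le_mul_of_nonneg_left hkey (show (0:ℝ) ≤ Tr ^ 2 * C by positivity)
  have huv : (Tr * C * dk) ^ 2 ≤ (C * Sk) * (Tr ^ 2 * c₀ * δ) := by nlinarith [huv0]
  have hw : 0 ≤ Tr * C * dk := by positivity
  have hu : 0 ≤ C * Sk := by positivity
  have hv : 0 ≤ Tr ^ 2 * c₀ * δ := by positivity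
  nlinarith [huv, hw, hu, hv, sq_nonneg (C * Sk - Tr ^ 2 * c₀ * δ), sq_nonneg (C * Sk + Tr ^ 2 * c₀ * δ - 2 * (Tr * C * dk))]

open Filter

theorem stmt_11 {E : Type*} [NormedAddCommGroup E] [NormedSpace ℝ E] [FiniteDimensional ℝ E]
    -- the sequence, extended by x^h = x^0 for h ≤ 0
    (x : ℤ → E) (hx0 : ∀ h : ℤ, h ≤ 0 → x h = x 0)
    (Φ : ℕ → ℝ) (hΦmono : Antitone Φ) (Φstar : ℝ)
    (hΦlim : Tendsto Φ atTop (nhds Φstar))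
    (C c₀ : ℝ) (hC : 0 < C) (hc₀ : 0 < c₀) (T : ℕ) (hT : 1 ≤ T) (k₀ : ℕ)
    -- φ ∈ F_η
    (η : ℝ) (hη : 0 < η) (φ : ℝ → ℝ)
    (hφ0 : φ 0 = 0) (hφnonneg : ∀ s ∈ Set.Ico (0 : ℝ) η, 0 ≤ φ s)
    (hφcont : ContinuousOn φ (Set.Ico 0 η))
    (hφconc : ConcaveOn ℝ (Set.Ico 0 η) φ)
    (hφdiff : ∀ s ∈ Set.Ioo (0 : ℝ) η, HasDerivAt φ (deriv φ s) s)
    (hφderivcont : ContinuousOn (deriv φ) (Set.Ioo 0 η))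
    (hφderivpos : ∀ s ∈ Set.Ioo (0 : ℝ) η, 0 < deriv φ s)
    -- (a) sufficient decrease
    (ha : ∀ k : ℕ, C * ‖x ((k : ℤ) + 1) - x k‖ ^ 2 ≤ Φ k - Φ (k + 1))
    -- (b) Φ* < Φ_k < Φ* + η for k ≥ k₀
    (hb : ∀ k : ℕ, k₀ ≤ k → Φstar < Φ k ∧ Φ k < Φstar + η)
    -- (c) KL-type inequality
    (hc : ∀ k : ℕ, k₀ ≤ k →
      1 ≤ deriv φ (Φ k - Φstar) *
        (c₀ * ∑ h ∈ Finset.Icc ((k : ℤ) - T) ((k : ℤ) - 1), ‖x (h + 1) - x h‖)) :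
    Summable (fun k : ℕ => ‖x ((k : ℤ) + 1) - x k‖) ∧
    ∃ p : E, Tendsto (fun k : ℕ => x k) atTop (nhds p) := by
  have hstar : ∀ k : ℕ, Φstar ≤ Φ k := fun k => hΦmono.le_of_tendsto hΦlim k
  have hTr : (1 : ℝ) ≤ (T : ℝ) := by exact_mod_cast hT
  -- Step inequality for k ≥ k₀
  have hstep : ∀ k : ℕ, k₀ ≤ k →
      0 ≤ φ (Φ k - Φstar) - φ (Φ (k + 1) - Φstar) ∧
      2 * (T : ℝ) * C * ‖x ((k : ℤ) + 1) - x k‖ ≤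
        C * (∑ h ∈ Finset.Icc ((k : ℤ) - T) ((k : ℤ) - 1), ‖x (h + 1) - x h‖)
        + (T : ℝ) ^ 2 * c₀ * (φ (Φ k - Φstar) - φ (Φ (k + 1) - Φstar)) := by
    intro k hk
    have hΔk : Φ k - Φstar ∈ Set.Ioo (0 : ℝ) η :=
      ⟨sub_pos.mpr (hb k hk).1, by linarith [(hb k hk).2]⟩
    have hΔk1 : Φ (k + 1) - Φstar ∈ Set.Ico (0 : ℝ) η :=
      ⟨sub_nonneg.mpr (hstar (k + 1)),
        lt_of_le_of_lt (by linarith [hΦmono (Nat.le_succ k)]) hΔk.2⟩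
    have h1 : deriv φ (Φ k - Φstar) * ((Φ k - Φstar) - (Φ (k + 1) - Φstar)) ≤
        φ (Φ k - Φstar) - φ (Φ (k + 1) - Φstar) := by
      rcases eq_or_lt_of_le (sub_le_sub_right (hΦmono (Nat.le_succ k)) Φstar) with heq | hlt
      · rw [heq]; simp
      · have hsl := hφconc.le_slope_of_hasDerivAt hΔk1 ⟨hΔk.1.le, hΔk.2⟩ hlt
          (hφdiff _ hΔk)
        rw [slope_def_field] at hsl
        have hpos : (0 : ℝ) < (Φ k - Φstar) - (Φ (k + 1) - Φstar) := sub_pos.mpr hlt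
        exact (le_div_iff₀ hpos).mp hsl
    have h2 : C * ‖x ((k : ℤ) + 1) - x k‖ ^ 2 ≤ (Φ k - Φstar) - (Φ (k + 1) - Φstar) := by
      have := ha k; linarith
    exact aux_step C c₀ (T : ℝ) _ _ _ _ _ hC hc₀ hTr (norm_nonneg _)
      (Finset.sum_nonneg fun h _ => norm_nonneg _) (hφderivpos _ hΔk) h1 h2 (hc k hk)
  -- Abbreviations
  have hA : 0 ≤ ∑ h ∈ Finset.Ico ((k₀ : ℤ) - T) (k₀ : ℤ), ‖x (h + 1) - x h‖ :=
    Finset.sum_nonneg fun h _ => norm_nonneg _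
  have hgk₀ : 0 ≤ φ (Φ k₀ - Φstar) :=
    hφnonneg _ ⟨sub_nonneg.mpr (hstar k₀), by linarith [(hb k₀ le_rfl).2]⟩
  -- Main bound on partial sums starting at k₀
  have hbound : ∀ N : ℕ, k₀ ≤ N →
      C * ∑ k ∈ Finset.Ico k₀ N, ‖x ((k : ℤ) + 1) - x k‖ ≤
      C * (∑ h ∈ Finset.Ico ((k₀ : ℤ) - T) (k₀ : ℤ), ‖x (h + 1) - x h‖)
        + (T : ℝ) * c₀ * φ (Φ k₀ - Φstar) := by
    intro N hN
    have hsum1 : 2 * (T : ℝ) * C * ∑ k ∈ Finset.Ico k₀ N, ‖x ((k : ℤ) + 1) - x k‖ ≤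
        C * (∑ k ∈ Finset.Ico k₀ N,
          ∑ h ∈ Finset.Icc ((k : ℤ) - T) ((k : ℤ) - 1), ‖x (h + 1) - x h‖)
        + (T : ℝ) ^ 2 * c₀ * (φ (Φ k₀ - Φstar) - φ (Φ N - Φstar)) := by
      calc 2 * (T : ℝ) * C * ∑ k ∈ Finset.Ico k₀ N, ‖x ((k : ℤ) + 1) - x k‖
          = ∑ k ∈ Finset.Ico k₀ N, 2 * (T : ℝ) * C * ‖x ((k : ℤ) + 1) - x k‖ := by
            rw [Finset.mul_sum]
        _ ≤ ∑ k ∈ Finset.Ico k₀ N,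
            (C * (∑ h ∈ Finset.Icc ((k : ℤ) - T) ((k : ℤ) - 1), ‖x (h + 1) - x h‖)
              + (T : ℝ) ^ 2 * c₀ * (φ (Φ k - Φstar) - φ (Φ (k + 1) - Φstar))) :=
            Finset.sum_le_sum fun k hk =>
              (hstep k (Finset.mem_Ico.mp hk).1).2
        _ = C * (∑ k ∈ Finset.Ico k₀ N,
              ∑ h ∈ Finset.Icc ((k : ℤ) - T) ((k : ℤ) - 1), ‖x (h + 1) - x h‖)
            + (T : ℝ) ^ 2 * c₀ * ∑ k ∈ Finset.Ico k₀ N,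
              (φ (Φ k - Φstar) - φ (Φ (k + 1) - Φstar)) := by
            rw [Finset.sum_add_distrib, Finset.mul_sum, Finset.mul_sum]
        _ = _ := by
            rw [aux_telescope (fun k => φ (Φ k - Φstar)) k₀ N hN]
    have hdouble := aux_double (fun h => ‖x (h + 1) - x h‖) (fun h => norm_nonneg _) T k₀ N
    have hsplit : ∑ h ∈ Finset.Ico ((k₀ : ℤ) - T) (N : ℤ), ‖x (h + 1) - x h‖ =
        (∑ h ∈ Finset.Ico ((k₀ : ℤ) - T) (k₀ : ℤ), ‖x (h + 1) - x h‖)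
        + ∑ k ∈ Finset.Ico k₀ N, ‖x ((k : ℤ) + 1) - x k‖ := by
      rw [aux_sum_cast (fun h => ‖x (h + 1) - x h‖) k₀ N,
        ← Finset.sum_union (Finset.Ico_disjoint_Ico_consecutive _ _ _),
        Finset.Ico_union_Ico_eq_Ico (by omega) (by exact_mod_cast hN)]
    rw [hsplit] at hdouble
    have hgN : 0 ≤ φ (Φ N - Φstar) :=
      hφnonneg _ ⟨sub_nonneg.mpr (hstar N), by linarith [(hb N hN).2]⟩
    have hC2 := mul_le_mul_of_nonneg_left hdouble hC.le
    have hT2 : 0 ≤ (T : ℝ) ^ 2 * c₀ * φ (Φ N - Φstar) := by positivity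
    have h9 : (C * ∑ k ∈ Finset.Ico k₀ N, ‖x ((k : ℤ) + 1) - x k‖) * (T : ℝ) ≤
        (C * (∑ h ∈ Finset.Ico ((k₀ : ℤ) - T) (k₀ : ℤ), ‖x (h + 1) - x h‖)
          + (T : ℝ) * c₀ * φ (Φ k₀ - Φstar)) * (T : ℝ) := by
      nlinarith [hsum1, hC2, hT2]
    exact le_of_mul_le_mul_right h9 (by linarith)
  -- Summability
  have hsummable : Summable (fun k : ℕ => ‖x ((k : ℤ) + 1) - x k‖) := by
    have hid : C * ((∑ h ∈ Finset.Ico ((k₀ : ℤ) - T) (k₀ : ℤ), ‖x (h + 1) - x h‖)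
        + (T : ℝ) * c₀ * φ (Φ k₀ - Φstar) / C) =
        C * (∑ h ∈ Finset.Ico ((k₀ : ℤ) - T) (k₀ : ℤ), ‖x (h + 1) - x h‖)
        + (T : ℝ) * c₀ * φ (Φ k₀ - Φstar) := by
      field_simp
    have hB : 0 ≤ (∑ h ∈ Finset.Ico ((k₀ : ℤ) - T) (k₀ : ℤ), ‖x (h + 1) - x h‖)
        + (T : ℝ) * c₀ * φ (Φ k₀ - Φstar) / C := by
      have h0 : 0 ≤ (T : ℝ) * c₀ * φ (Φ k₀ - Φstar) / C := by positivity
      linarith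
    apply summable_of_sum_range_le
      (c := (∑ i ∈ Finset.range k₀, ‖x ((i : ℤ) + 1) - x i‖)
        + ((∑ h ∈ Finset.Ico ((k₀ : ℤ) - T) (k₀ : ℤ), ‖x (h + 1) - x h‖)
          + (T : ℝ) * c₀ * φ (Φ k₀ - Φstar) / C))
      (fun n => norm_nonneg _)
    intro n
    rcases le_or_gt n k₀ with h | h
    · have h1 : ∑ i ∈ Finset.range n, ‖x ((i : ℤ) + 1) - x i‖ ≤
          ∑ i ∈ Finset.range k₀, ‖x ((i : ℤ) + 1) - x i‖ :=
        Finset.sum_le_sum_of_subset_of_nonneg (Finset.range_subset_range.mpr h)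
          (fun i _ _ => norm_nonneg _)
      linarith
    · have hsplit : ∑ i ∈ Finset.range n, ‖x ((i : ℤ) + 1) - x i‖ =
          (∑ i ∈ Finset.range k₀, ‖x ((i : ℤ) + 1) - x i‖)
          + ∑ k ∈ Finset.Ico k₀ n, ‖x ((k : ℤ) + 1) - x k‖ := by
        simp only [Finset.range_eq_Ico]
        rw [← Finset.sum_Ico_consecutive _ (Nat.zero_le k₀) h.le]
      have hb' := hbound n h.le
      have h2 : ∑ k ∈ Finset.Ico k₀ n, ‖x ((k : ℤ) + 1) - x k‖ ≤
          (∑ h ∈ Finset.Ico ((k₀ : ℤ) - T) (k₀ : ℤ), ‖x (h + 1) - x h‖)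
          + (T : ℝ) * c₀ * φ (Φ k₀ - Φstar) / C := by
        refine le_of_mul_le_mul_left ?_ hC
        rw [hid]
        exact hb'
      linarith
  refine ⟨hsummable, ?_⟩
  -- Convergence
  have hsum2 : Summable (fun k : ℕ => x ((k : ℤ) + 1) - x (k : ℤ)) :=
    Summable.of_norm hsummable
  obtain ⟨L, hL⟩ := hsum2
  have htel : ∀ n : ℕ, ∑ i ∈ Finset.range n, (x ((i : ℤ) + 1) - x (i : ℤ))
      = x (n : ℤ) - x 0 := by
    intro n
    induction n with
    | zero => simp
    | succ m ih =>
      rw [Finset.sum_range_succ, ih]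
      push_cast
      abel
  have htend := hL.tendsto_sum_nat
  simp only [htel] at htend
  refine ⟨L + x 0, ?_⟩
  have := htend.add_const (x 0)
  simpa using this
end

section
/- Let T ≥ 1 be an integer, C₁ > 0, θ ∈ (0, 1/2], k₀ ∈ ℕ, and let {Φ_k}_{k∈ℕ} be a nonincreasing sequence of nonnegative reals converging to 0 such that Φ_k − Φ_{k+T} ≥ C₁ Φ_{k+T}^{2θ} for every k ≥ k₀. Then {Φ_k} converges linearly: there exist c > 0 and ρ ∈ (0,1) such that Φ_k ≤ c·ρ^k for all k ∈ ℕ. -/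
theorem stmt_13 (T : ℕ) (hT : 1 ≤ T) (C₁ : ℝ) (hC₁ : 0 < C₁)
    (θ : ℝ) (hθ : θ ∈ Set.Ioc (0 : ℝ) (1 / 2)) (k₀ : ℕ)
    (Φ : ℕ → ℝ) (hmono : Antitone Φ) (hnonneg : ∀ k, 0 ≤ Φ k)
    (hlim : Filter.Tendsto Φ Filter.atTop (nhds 0))
    (hdec : ∀ k, k₀ ≤ k → C₁ * Φ (k + T) ^ (2 * θ) ≤ Φ k - Φ (k + T)) :
    ∃ c : ℝ, 0 < c ∧ ∃ ρ ∈ Set.Ioo (0 : ℝ) 1, ∀ k : ℕ, Φ k ≤ c * ρ ^ k := by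
  obtain ⟨hθ0, hθ1⟩ := hθ
  have hC : (0:ℝ) < 1 + C₁ := by linarith
  set r : ℝ := 1 / (1 + C₁) with hr
  have hr0 : 0 < r := by positivity
  have hr1 : r < 1 := by rw [hr, div_lt_one hC]; linarith
  have hT0 : (0:ℝ) < (T:ℝ) := by exact_mod_cast hT
  set ρ : ℝ := r ^ ((T:ℝ)⁻¹) with hρ
  have hρ0 : 0 < ρ := Real.rpow_pos_of_pos hr0 _
  have hρ1 : ρ < 1 := Real.rpow_lt_one hr0.le hr1 (by positivity)
  have hρT : ρ ^ T = r := by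
    rw [hρ, ← Real.rpow_natCast (r ^ (T:ℝ)⁻¹) T, ← Real.rpow_mul hr0.le,
      inv_mul_cancel₀ (ne_of_gt hT0), Real.rpow_one]
  obtain ⟨N, hN1, hNk₀⟩ := ((hlim.eventually (gt_mem_nhds one_pos)).and
    (Filter.eventually_ge_atTop k₀)).exists
  have key : ∀ k, N ≤ k → Φ (k + T) ≤ r * Φ k := by
    intro k hk
    have hk₀ : k₀ ≤ k := le_trans hNk₀ hk
    have hd := hdec k hk₀
    have hx0 : 0 ≤ Φ (k+T) := hnonneg _
    have hx1 : Φ (k+T) ≤ 1 :=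
      le_trans (hmono (le_trans hk (Nat.le_add_right k T))) hN1.le
    rcases hx0.lt_or_eq with hpos | heq
    · have hexp : Φ (k+T) ^ (1:ℝ) ≤ Φ (k+T) ^ (2*θ) :=
        Real.rpow_le_rpow_of_exponent_ge hpos hx1 (by linarith)
      rw [Real.rpow_one] at hexp
      have h2 : (1 + C₁) * Φ (k+T) ≤ Φ k := by nlinarith
      rw [hr, div_mul_eq_mul_div, one_mul, le_div_iff₀ hC]
      linarith
    · rw [← heq]; exact mul_nonneg hr0.le (hnonneg k)
  have geom : ∀ n : ℕ, Φ (N + n * T) ≤ r ^ n * Φ N := by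
    intro n
    induction n with
    | zero => simp
    | succ n ih =>
      have h1 : Φ (N + n*T + T) ≤ r * Φ (N + n*T) := key _ (Nat.le_add_right _ _)
      have h2 : N + (n+1)*T = N + n*T + T := by ring
      rw [h2]
      calc Φ (N + n*T + T) ≤ r * Φ (N + n*T) := h1
        _ ≤ r * (r^n * Φ N) := mul_le_mul_of_nonneg_left ih hr0.le
        _ = r^(n+1) * Φ N := by ring
  have hρTN : (0:ℝ) < ρ ^ (T + N) := pow_pos hρ0 _
  refine ⟨(Φ 0 + 1) / ρ ^ (T + N), div_pos (by linarith [hnonneg 0]) hρTN, ρ, ⟨hρ0, hρ1⟩, ?_⟩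
  intro k
  have hΦ0 : Φ k ≤ Φ 0 := hmono (Nat.zero_le k)
  rcases lt_or_ge k N with hk | hk
  · have hkle : k ≤ T + N := by omega
    have h3 : ρ ^ (T+N) ≤ ρ ^ k := pow_le_pow_of_le_one hρ0.le hρ1.le hkle
    rw [div_mul_eq_mul_div, le_div_iff₀ hρTN]
    nlinarith [hnonneg 0, hnonneg k]
  · obtain ⟨q, s, hs, hqs⟩ : ∃ q s, s < T ∧ k - N = q * T + s :=
      ⟨(k - N) / T, (k - N) % T, Nat.mod_lt _ (by omega), (Nat.div_add_mod' _ _).symm⟩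
    have hrq : (0:ℝ) < r ^ q := pow_pos hr0 q
    have h1 : N + q * T ≤ k := by omega
    have h2 : k ≤ N + q * T + T := by omega
    have hΦ : Φ k ≤ r ^ q * Φ N := le_trans (hmono h1) (geom q)
    have hA : Φ k ≤ r ^ q * (Φ 0 + 1) := by
      refine hΦ.trans (mul_le_mul_of_nonneg_left ?_ hrq.le)
      linarith [hmono (Nat.zero_le N)]
    have hρk : ρ ^ (N + q*T + T) ≤ ρ ^ k := pow_le_pow_of_le_one hρ0.le hρ1.le h2
    have heq : ρ ^ (N + q*T + T) = ρ ^ (T+N) * r ^ q := by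
      rw [← hρT, ← pow_mul, ← pow_add]; congr 1; ring
    rw [div_mul_eq_mul_div, le_div_iff₀ hρTN]
    nlinarith [hnonneg 0]
end
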